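/- arXiv:1904.09683 — 8 statements merged into one kernel-verified Lean document; each statement's English description precedes it below -/
import Mathlib

section
/- Let t₀ < T and I = [t₀, T]. Let F, G : ℝ → ℝ be continuous on I, and let Φ : ℝ → ℝ be twice continuously differentiable with Φ(t) > 0 for all t ∈ I. Suppose G(t) ≤ -Φ''(t)/Φ(t) - (Φ'(t)/Φ(t))·F(t) for all t ∈ I. Then any twice differentiable function Y : ℝ → ℝ satisfying Y''(t) + F(t)·Y'(t) + G(t)·Y(t) = 0 for all t ∈ I, with initial data Y(t₀) = Φ(t₀) and Y'(t₀) = Φ'(t₀), satisfies Y(t) ≥ Φ(t) for all t ∈ I. -/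
open Set Topology Filter

lemma comparison_key
    (t₀ T b : ℝ) (ht : t₀ < T) (hb : b ∈ Icc t₀ T)
    (F G Φ Y : ℝ → ℝ)
    (hF : ContinuousOn F (Icc t₀ T))
    (hΦ : ContDiff ℝ 2 Φ)
    (hΦpos : ∀ t ∈ Icc t₀ T, 0 < Φ t)
    (hGle : ∀ t ∈ Icc t₀ T,
      G t ≤ -(deriv (deriv Φ) t) / Φ t - (deriv Φ t / Φ t) * F t)
    (hY1 : ∀ t ∈ Icc t₀ T, DifferentiableAt ℝ Y t)
    (hY2 : ∀ t ∈ Icc t₀ T, DifferentiableAt ℝ (deriv Y) t)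
    (hODE : ∀ t ∈ Icc t₀ T,
      deriv (deriv Y) t + F t * deriv Y t + G t * Y t = 0)
    (hic : Y t₀ = Φ t₀) (hic' : deriv Y t₀ = deriv Φ t₀)
    (hYpos : ∀ s ∈ Icc t₀ b, 0 < Y s) :
    ∀ s ∈ Icc t₀ b, Φ s ≤ Y s := by
  have hsub : Icc t₀ b ⊆ Icc t₀ T := Icc_subset_Icc le_rfl hb.2
  -- Φ is C², get differentiability of Φ and deriv Φ
  have hΦd : Differentiable ℝ Φ := hΦ.differentiable two_ne_zero
  have hΦ' : ContDiff ℝ 1 (deriv Φ) := by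
    have h2 : ContDiff ℝ (1 + 1) Φ := by
      exact_mod_cast hΦ
    exact (contDiff_succ_iff_deriv.mp h2).2.2
  have hΦ'd : Differentiable ℝ (deriv Φ) := hΦ'.differentiable one_ne_zero
  -- clamped F
  set g : ℝ → ℝ := fun t => max t₀ (min t T) with hg
  have hgc : Continuous g := continuous_const.max (continuous_id.min continuous_const)
  have hgmem : ∀ t, g t ∈ Icc t₀ T := fun t =>
    ⟨le_max_left _ _, max_le ht.le (min_le_right _ _)⟩
  have hgeq : ∀ t ∈ Icc t₀ T, g t = t := fun t htI => by
    simp [hg, min_eq_left htI.2, max_eq_right htI.1]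
  set Fc : ℝ → ℝ := fun t => F (g t) with hFcdef
  have hFc : Continuous Fc := hF.comp_continuous hgc hgmem
  have hFeq : ∀ t ∈ Icc t₀ T, Fc t = F t := fun t htI => by
    simp [hFcdef, hgeq t htI]
  -- integrating factor
  set ψ : ℝ → ℝ := fun t => ∫ s in t₀..t, Fc s with hψdef
  have hψ : ∀ t, HasDerivAt ψ (Fc t) t := fun t =>
    intervalIntegral.integral_hasDerivAt_right (hFc.intervalIntegrable _ _)
      (hFc.stronglyMeasurableAtFilter _ _) hFc.continuousAt
  -- Wronskian
  set W : ℝ → ℝ := fun t => deriv Y t * Φ t - Y t * deriv Φ t with hWdef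
  have hW : ∀ t ∈ Icc t₀ T, HasDerivAt W
      (deriv (deriv Y) t * Φ t - Y t * deriv (deriv Φ) t) t := by
    intro t htI
    have h1 : HasDerivAt (deriv Y) (deriv (deriv Y) t) t := (hY2 t htI).hasDerivAt
    have h2 : HasDerivAt Y (deriv Y t) t := (hY1 t htI).hasDerivAt
    have h3 : HasDerivAt Φ (deriv Φ t) t := (hΦd t).hasDerivAt
    have h4 : HasDerivAt (deriv Φ) (deriv (deriv Φ) t) t := (hΦ'd t).hasDerivAt
    have := (h1.mul h3).sub (h2.mul h4)
    exact this.congr_deriv (by ring)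
  set U : ℝ → ℝ := fun t => W t * Real.exp (ψ t) with hUdef
  have hU : ∀ t ∈ Icc t₀ T, HasDerivAt U
      ((deriv (deriv Y) t * Φ t - Y t * deriv (deriv Φ) t) * Real.exp (ψ t)
        + W t * (Real.exp (ψ t) * Fc t)) t := by
    intro t htI
    exact (hW t htI).mul ((hψ t).exp)
  -- derivative of U nonneg on Icc t₀ b
  have hUderiv : ∀ t ∈ Icc t₀ b, 0 ≤
      ((deriv (deriv Y) t * Φ t - Y t * deriv (deriv Φ) t) * Real.exp (ψ t)
        + W t * (Real.exp (ψ t) * Fc t)) := by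
    intro t htb
    have htI : t ∈ Icc t₀ T := hsub htb
    have hODEt := hODE t htI
    have hΦt := hΦpos t htI
    have hYt := (hYpos t htb).le
    have hFt := hFeq t htI
    have hGt := hGle t htI
    have hGmul : G t * Φ t ≤ -(deriv (deriv Φ) t) - deriv Φ t * F t := by
      have h := mul_le_mul_of_nonneg_right hGt hΦt.le
      have heq : (-(deriv (deriv Φ) t) / Φ t - deriv Φ t / Φ t * F t) * Φ t
          = -(deriv (deriv Φ) t) - deriv Φ t * F t := by
        field_simp
      linarith [heq ▸ h]
    have hY'' : deriv (deriv Y) t = -(F t * deriv Y t) - G t * Y t := by linarith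
    have hkey : 0 ≤ Y t * (-(G t * Φ t) - deriv (deriv Φ) t - deriv Φ t * F t) :=
      mul_nonneg hYt (by linarith)
    have hexp := Real.exp_pos (ψ t)
    have hWt : W t = deriv Y t * Φ t - Y t * deriv Φ t := rfl
    rw [hFt, hWt, hY'']
    have heq2 : ((-(F t * deriv Y t) - G t * Y t) * Φ t - Y t * deriv (deriv Φ) t)
          * Real.exp (ψ t)
        + (deriv Y t * Φ t - Y t * deriv Φ t) * (Real.exp (ψ t) * F t)
        = (Y t * (-(G t * Φ t) - deriv (deriv Φ) t - deriv Φ t * F t))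
          * Real.exp (ψ t) := by ring
    rw [heq2]
    exact mul_nonneg hkey hexp.le
  -- U is monotone on Icc t₀ b
  have hUmono : MonotoneOn U (Icc t₀ b) := by
    apply monotoneOn_of_deriv_nonneg (convex_Icc t₀ b)
    · exact fun t htb => ((hU t (hsub htb)).differentiableAt.continuousAt).continuousWithinAt
    · intro t htb
      rw [interior_Icc] at htb
      exact ((hU t (hsub (Ioo_subset_Icc_self htb))).differentiableAt).differentiableWithinAt
    · intro t htb
      rw [interior_Icc] at htb
      have htb' := Ioo_subset_Icc_self htb
      rw [(hU t (hsub htb')).deriv]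
      exact hUderiv t htb'
  have hWt₀ : W t₀ = 0 := by
    simp [hWdef, hic, hic']
    ring
  have hUt₀ : U t₀ = 0 := by simp [hUdef, hWt₀]
  have hWnn : ∀ s ∈ Icc t₀ b, 0 ≤ W s := by
    intro s hs
    have : (0:ℝ) ≤ U s := by
      rw [← hUt₀]
      exact hUmono ⟨le_rfl, hs.1.trans hs.2⟩ hs hs.1
    exact (mul_nonneg_iff_of_pos_right (Real.exp_pos (ψ s))).mp this
  -- ratio R = Y/Φ
  set R : ℝ → ℝ := fun s => Y s / Φ s with hRdef
  have hR : ∀ t ∈ Icc t₀ T, HasDerivAt R (W t / (Φ t)^2) t := by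
    intro t htI
    exact ((hY1 t htI).hasDerivAt.div (hΦd t).hasDerivAt (hΦpos t htI).ne')
  have hRmono : MonotoneOn R (Icc t₀ b) := by
    apply monotoneOn_of_deriv_nonneg (convex_Icc t₀ b)
    · exact fun t htb => ((hR t (hsub htb)).differentiableAt.continuousAt).continuousWithinAt
    · intro t htb
      rw [interior_Icc] at htb
      exact ((hR t (hsub (Ioo_subset_Icc_self htb))).differentiableAt).differentiableWithinAt
    · intro t htb
      rw [interior_Icc] at htb
      have htb' := Ioo_subset_Icc_self htb
      rw [(hR t (hsub htb')).deriv]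
      exact div_nonneg (hWnn t htb') (sq_nonneg _)
  intro s hs
  have h1 : R t₀ ≤ R s := hRmono ⟨le_rfl, hs.1.trans hs.2⟩ hs hs.1
  have hRt₀ : R t₀ = 1 := by
    simp [hRdef, hic]
    exact (hΦpos t₀ (left_mem_Icc.mpr ht.le)).ne'
  rw [hRt₀] at h1
  exact (one_le_div (hΦpos s (hsub hs))).mp h1


/-- Comparison principle (Theorem 1): if `G t ≤ -Φ''/Φ - (Φ'/Φ)·F` on `I = [t₀, T]`
for a positive `C²` comparison function `Φ`, then a solution of
`Y'' + F·Y' + G·Y = 0` with initial data matching `Φ` dominates `Φ` on `I`. -/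
theorem comparison_principle_lower_bound
    (t₀ T : ℝ) (ht : t₀ < T)
    (F G Φ Y : ℝ → ℝ)
    (hF : ContinuousOn F (Icc t₀ T))
    (hG : ContinuousOn G (Icc t₀ T))
    (hΦ : ContDiff ℝ 2 Φ)
    (hΦpos : ∀ t ∈ Icc t₀ T, 0 < Φ t)
    (hGle : ∀ t ∈ Icc t₀ T,
      G t ≤ -(deriv (deriv Φ) t) / Φ t - (deriv Φ t / Φ t) * F t)
    (hY1 : ∀ t ∈ Icc t₀ T, DifferentiableAt ℝ Y t)
    (hY2 : ∀ t ∈ Icc t₀ T, DifferentiableAt ℝ (deriv Y) t)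
    (hODE : ∀ t ∈ Icc t₀ T,
      deriv (deriv Y) t + F t * deriv Y t + G t * Y t = 0)
    (hic : Y t₀ = Φ t₀) (hic' : deriv Y t₀ = deriv Φ t₀) :
    ∀ t ∈ Icc t₀ T, Φ t ≤ Y t := by
  by_contra hcon
  push_neg at hcon
  obtain ⟨a₀, ha₀I, ha₀⟩ := hcon
  set A : Set ℝ := {t | t ∈ Icc t₀ T ∧ Y t < Φ t} with hAdef
  have hAne : A.Nonempty := ⟨a₀, ha₀I, ha₀⟩
  have hAbdd : BddBelow A := ⟨t₀, fun x hx => hx.1.1⟩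
  set t₁ : ℝ := sInf A with ht₁def
  have ht₁lb : t₀ ≤ t₁ := le_csInf hAne fun x hx => hx.1.1
  have ht₁ub : t₁ ≤ T :=
    le_trans (csInf_le hAbdd (show a₀ ∈ A from ⟨ha₀I, ha₀⟩)) ha₀I.2
  have ht₁I : t₁ ∈ Icc t₀ T := ⟨ht₁lb, ht₁ub⟩
  -- on [t₀, t₁), Φ ≤ Y
  have hleft : ∀ s, t₀ ≤ s → s < t₁ → Φ s ≤ Y s := by
    intro s hs1 hs2
    by_contra hno
    push_neg at hno
    have : s ∈ A := ⟨⟨hs1, hs2.le.trans ht₁ub⟩, hno⟩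
    exact absurd (csInf_le hAbdd this) (not_le.mpr hs2)
  -- Φ t₁ ≤ Y t₁
  have hYcont : ContinuousAt Y t₁ := (hY1 t₁ ht₁I).continuousAt
  have ht₁ge : Φ t₁ ≤ Y t₁ := by
    rcases eq_or_lt_of_le ht₁lb with heq | hlt
    · rw [← heq, hic]
    · -- limit from the left
      have hcl : t₁ ∈ closure (Ico t₀ t₁) := by
        rw [closure_Ico hlt.ne]
        exact ⟨ht₁lb, le_rfl⟩
      have hne : (𝓝[Ico t₀ t₁] t₁).NeBot := mem_closure_iff_nhdsWithin_neBot.mp hcl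
      have htend : Filter.Tendsto (fun s => Y s - Φ s) (𝓝[Ico t₀ t₁] t₁)
          (𝓝 (Y t₁ - Φ t₁)) :=
        ((hYcont.sub (hΦ.continuous.continuousAt)).continuousWithinAt).tendsto
      have hev : ∀ᶠ s in 𝓝[Ico t₀ t₁] t₁, 0 ≤ Y s - Φ s :=
        Filter.eventually_of_mem self_mem_nhdsWithin
          (fun s hs => sub_nonneg.mpr (hleft s hs.1 hs.2))
      have := ge_of_tendsto htend hev
      linarith
  have hYt₁pos : 0 < Y t₁ := lt_of_lt_of_le (hΦpos t₁ ht₁I) ht₁ge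
  -- Y positive near t₁
  have hnhds : {s | 0 < Y s} ∈ 𝓝 t₁ := hYcont (Ioi_mem_nhds hYt₁pos)
  obtain ⟨δ, hδpos, hδ⟩ := Metric.mem_nhds_iff.mp hnhds
  set t₂ : ℝ := min (t₁ + δ / 2) T with ht₂def
  have ht₂I : t₂ ∈ Icc t₀ T :=
    ⟨le_min (ht₁lb.trans (by linarith)) ht.le, min_le_right _ _⟩
  have ht₁t₂ : t₁ ≤ t₂ := le_min (by linarith) ht₁ub
  -- Y positive on [t₀, t₂]
  have hpos : ∀ s ∈ Icc t₀ t₂, 0 < Y s := by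
    intro s hs
    rcases lt_or_ge s t₁ with h | h
    · exact lt_of_lt_of_le (hΦpos s ⟨hs.1, hs.2.trans ht₂I.2⟩) (hleft s hs.1 h)
    · apply hδ
      have hs2 : s ≤ t₁ + δ / 2 := hs.2.trans (min_le_left _ _)
      simp only [Metric.mem_ball, Real.dist_eq]
      rw [abs_of_nonneg (by linarith)]
      linarith
  have hkey := comparison_key t₀ T t₂ ht ht₂I F G Φ Y hF hΦ hΦpos hGle hY1 hY2
    hODE hic hic' hpos
  -- contradiction
  rcases eq_or_lt_of_le ht₁t₂ with heq | hlt
  · -- t₂ = t₁ means T = t₁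
    have hTt₁ : T = t₁ := by
      have h1 : min (t₁ + δ / 2) T = t₁ := heq.symm
      rcases le_or_gt (t₁ + δ / 2) T with h | h
      · rw [min_eq_left h] at h1; linarith
      · rw [min_eq_right h.le] at h1
        exact h1
    have ha₀t₁ : a₀ = t₁ := le_antisymm (hTt₁ ▸ ha₀I.2)
      (csInf_le hAbdd (show a₀ ∈ A from ⟨ha₀I, ha₀⟩))
    rw [ha₀t₁] at ha₀
    linarith
  · obtain ⟨a, haA, halt⟩ := exists_lt_of_csInf_lt hAne hlt
    have : Φ a ≤ Y a := hkey a ⟨haA.1.1, halt.le⟩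
    linarith [haA.2]
end

section
/- Let t₀ < T, I = [t₀, T], and δ > 0. Let F, G : ℝ → ℝ be continuous on I and μ : ℝ → ℝ twice continuously differentiable with μ(t) > 0 on I. Suppose G(t) ≤ -μ''(t)/μ(t) - 2δ·μ'(t)/μ(t) - δ² - (μ'(t)/μ(t) + δ)·F(t) for all t ∈ I. Then any twice differentiable Y : ℝ → ℝ satisfying Y'' + F(t)Y' + G(t)Y = 0 on I, with Y(t₀) = μ(t₀)·exp(δt₀) and Y'(t₀) = (μ'(t₀) + δμ(t₀))·exp(δt₀), satisfies Y(t) ≥ μ(t)·exp(δt) for all t ∈ I. -/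
open Set Real

/-- Corollary 1: with comparison function `Φ(t) = μ(t)·exp(δt)`, the coefficient
inequality forces a solution of `Y'' + F·Y' + G·Y = 0` with matching initial data
to grow at least like `μ(t)·exp(δt)` on `I = [t₀, T]`. -/
theorem comparison_exponential_growth
    (t₀ T δ : ℝ) (ht : t₀ < T) (hδ : 0 < δ)
    (F G μ Y : ℝ → ℝ)
    (hF : ContinuousOn F (Icc t₀ T))
    (hG : ContinuousOn G (Icc t₀ T))
    (hμ : ContDiff ℝ 2 μ)
    (hμpos : ∀ t ∈ Icc t₀ T, 0 < μ t)
    (hGle : ∀ t ∈ Icc t₀ T,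
      G t ≤ -(deriv (deriv μ) t) / μ t - 2 * δ * (deriv μ t / μ t) - δ ^ 2
        - (deriv μ t / μ t + δ) * F t)
    (hY1 : ∀ t ∈ Icc t₀ T, DifferentiableAt ℝ Y t)
    (hY2 : ∀ t ∈ Icc t₀ T, DifferentiableAt ℝ (deriv Y) t)
    (hODE : ∀ t ∈ Icc t₀ T,
      deriv (deriv Y) t + F t * deriv Y t + G t * Y t = 0)
    (hic : Y t₀ = μ t₀ * Real.exp (δ * t₀))
    (hic' : deriv Y t₀ = (deriv μ t₀ + δ * μ t₀) * Real.exp (δ * t₀)) :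
    ∀ t ∈ Icc t₀ T, μ t * Real.exp (δ * t) ≤ Y t := by
  -- smoothness of μ
  have hμ1 : Differentiable ℝ μ := hμ.differentiable (by norm_num)
  have hμd : ContDiff ℝ 1 (deriv μ) := by
    have h : ContDiff ℝ ((1 : WithTop ℕ∞) + 1) μ := by norm_num; exact hμ
    exact (contDiff_succ_iff_deriv.mp h).2.2
  have hμ2 : Differentiable ℝ (deriv μ) := hμd.differentiable (by norm_num)
  -- comparison function and its derivatives
  set Φ : ℝ → ℝ := fun t => μ t * Real.exp (δ * t) with hΦdef
  set Φ' : ℝ → ℝ := fun t => (deriv μ t + δ * μ t) * Real.exp (δ * t) with hΦ'def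
  set Φ'' : ℝ → ℝ := fun t =>
    (deriv (deriv μ) t + 2 * δ * deriv μ t + δ ^ 2 * μ t) * Real.exp (δ * t) with hΦ''def
  have hexp : ∀ t : ℝ, HasDerivAt (fun s => Real.exp (δ * s)) (δ * Real.exp (δ * t)) t := by
    intro t
    have := ((hasDerivAt_id t).const_mul δ).exp
    simpa [mul_comm] using this
  have hΦd : ∀ t, HasDerivAt Φ (Φ' t) t := by
    intro t
    have h : HasDerivAt (fun s => μ s * Real.exp (δ * s))
        (deriv μ t * Real.exp (δ * t) + μ t * (δ * Real.exp (δ * t))) t :=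
      ((hμ1 t).hasDerivAt).mul (hexp t)
    convert h using 1
    simp only [hΦ'def]; ring
  have hΦ'd : ∀ t, HasDerivAt Φ' (Φ'' t) t := by
    intro t
    have h1 : HasDerivAt (fun s => deriv μ s + δ * μ s)
        (deriv (deriv μ) t + δ * deriv μ t) t :=
      ((hμ2 t).hasDerivAt).add (((hμ1 t).hasDerivAt).const_mul δ)
    have h : HasDerivAt (fun s => (deriv μ s + δ * μ s) * Real.exp (δ * s))
        ((deriv (deriv μ) t + δ * deriv μ t) * Real.exp (δ * t)
          + (deriv μ t + δ * μ t) * (δ * Real.exp (δ * t))) t := h1.mul (hexp t)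
    convert h using 1
    simp only [hΦ''def]; ring
  have hΦpos : ∀ t ∈ Icc t₀ T, 0 < Φ t := fun t htI => mul_pos (hμpos t htI) (Real.exp_pos _)
  have hΦc : Continuous Φ := (hμ1.continuous).mul (Real.continuous_exp.comp (continuous_const.mul continuous_id))
  have hΦ'c : Continuous Φ' :=
    (hμ2.continuous.add (continuous_const.mul hμ1.continuous)).mul
      (Real.continuous_exp.comp (continuous_const.mul continuous_id))
  -- initial conditions in terms of Φ
  have hicΦ : Y t₀ = Φ t₀ := hic
  have hicΦ' : deriv Y t₀ = Φ' t₀ := hic'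
  -- the key differential inequality for Φ
  have hkey : ∀ t ∈ Icc t₀ T, Φ'' t + F t * Φ' t + G t * Φ t ≤ 0 := by
    intro t htI
    have hm := hμpos t htI
    have h := hGle t htI
    have h2 : G t * μ t ≤ -(deriv (deriv μ) t) - 2 * δ * deriv μ t - δ ^ 2 * μ t
        - (deriv μ t + δ * μ t) * F t := by
      have h3 := mul_le_mul_of_nonneg_right h hm.le
      calc G t * μ t ≤ (-(deriv (deriv μ) t) / μ t - 2 * δ * (deriv μ t / μ t) - δ ^ 2
            - (deriv μ t / μ t + δ) * F t) * μ t := h3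
        _ = -(deriv (deriv μ) t) - 2 * δ * deriv μ t - δ ^ 2 * μ t
            - (deriv μ t + δ * μ t) * F t := by field_simp
    have he := Real.exp_pos (δ * t)
    have h3 := mul_le_mul_of_nonneg_right h2 he.le
    have h4 : Φ'' t + F t * Φ' t + G t * Φ t
        = (deriv (deriv μ) t + 2 * δ * deriv μ t + δ ^ 2 * μ t
            + (deriv μ t + δ * μ t) * F t) * Real.exp (δ * t)
          + G t * μ t * Real.exp (δ * t) := by
      simp only [hΦdef, hΦ'def, hΦ''def]; ring
    rw [h4]
    nlinarith [h3]
  -- continuity of Y, deriv Y on I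
  have hYc : ContinuousOn Y (Icc t₀ T) := fun t h => ((hY1 t h).continuousAt).continuousWithinAt
  have hY'c : ContinuousOn (deriv Y) (Icc t₀ T) := fun t h => ((hY2 t h).continuousAt).continuousWithinAt
  -- integrating factor
  set ρ : ℝ → ℝ := fun t => Real.exp (∫ s in t₀..t, F s) with hρdef
  have hρpos : ∀ t, 0 < ρ t := fun t => Real.exp_pos _
  have hρc : ContinuousOn ρ (Icc t₀ T) := by
    have hint : MeasureTheory.IntegrableOn F (uIcc t₀ T) := by
      rw [uIcc_of_le ht.le]; exact hF.integrableOn_Icc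
    have h1 := intervalIntegral.continuousOn_primitive_interval hint
    rw [uIcc_of_le ht.le] at h1
    exact Real.continuous_exp.comp_continuousOn h1
  have hρd : ∀ t ∈ Ioo t₀ T, HasDerivAt ρ (F t * ρ t) t := by
    intro t htI
    have htmem : t ∈ Icc t₀ T := Ioo_subset_Icc_self htI
    have hint : IntervalIntegrable F MeasureTheory.volume t₀ t := by
      apply ContinuousOn.intervalIntegrable
      rw [uIcc_of_le htI.1.le]
      exact hF.mono (Icc_subset_Icc le_rfl htI.2.le)
    have hca : ContinuousAt F t := (hF t htmem).continuousAt (Icc_mem_nhds htI.1 htI.2)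
    have hmeas : StronglyMeasurableAtFilter F (nhds t) :=
      ContinuousOn.stronglyMeasurableAtFilter isOpen_Ioo (hF.mono Ioo_subset_Icc_self) t htI
    have h1 := intervalIntegral.integral_hasDerivAt_right hint hmeas hca
    have h2 := h1.exp
    simpa [hρdef, mul_comm] using h2
  -- the auxiliary Wronskian-type function
  set A : ℝ → ℝ := fun t => ρ t * (deriv Y t * Φ t - Y t * Φ' t) with hAdef
  have hA0 : A t₀ = 0 := by
    simp only [hAdef, hicΦ, hicΦ']
    ring
  -- key comparison lemma on subintervals where Y ≥ 0
  have key : ∀ b ∈ Icc t₀ T, (∀ r ∈ Icc t₀ b, 0 ≤ Y r) → ∀ r ∈ Icc t₀ b, Φ r ≤ Y r := by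
    intro b hb hpos
    have hsub : Icc t₀ b ⊆ Icc t₀ T := Icc_subset_Icc le_rfl hb.2
    have hsubo : Ioo t₀ b ⊆ Ioo t₀ T := Ioo_subset_Ioo le_rfl hb.2
    have hAd : ∀ t ∈ Ioo t₀ b, HasDerivAt A
        (F t * ρ t * (deriv Y t * Φ t - Y t * Φ' t)
          + ρ t * ((deriv (deriv Y) t * Φ t + deriv Y t * Φ' t)
            - (deriv Y t * Φ' t + Y t * Φ'' t))) t := by
      intro t htI
      have ht' : t ∈ Icc t₀ T := Ioo_subset_Icc_self (hsubo htI)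
      exact (hρd t (hsubo htI)).mul
        ((((hY2 t ht').hasDerivAt).mul (hΦd t)).sub (((hY1 t ht').hasDerivAt).mul (hΦ'd t)))
    have hAcont : ContinuousOn A (Icc t₀ b) :=
      (hρc.mono hsub).mul (((hY'c.mono hsub).mul (hΦc.continuousOn.mono (fun x _ => trivial))).sub
        ((hYc.mono hsub).mul (hΦ'c.continuousOn.mono (fun x _ => trivial))))
    have hAmono : MonotoneOn A (Icc t₀ b) := by
      apply monotoneOn_of_deriv_nonneg (convex_Icc _ _) hAcont
      · intro t htI
        rw [interior_Icc] at htI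
        exact ((hAd t htI).differentiableAt).differentiableWithinAt
      · intro t htI
        rw [interior_Icc] at htI
        have ht' : t ∈ Icc t₀ T := Ioo_subset_Icc_self (hsubo htI)
        rw [(hAd t htI).deriv]
        have hode := hODE t ht'
        have hY'' : deriv (deriv Y) t = -(F t * deriv Y t + G t * Y t) := by linarith
        rw [hY'']
        have h1 : F t * ρ t * (deriv Y t * Φ t - Y t * Φ' t)
            + ρ t * ((-(F t * deriv Y t + G t * Y t) * Φ t + deriv Y t * Φ' t)
              - (deriv Y t * Φ' t + Y t * Φ'' t))
            = ρ t * (Y t * (-(Φ'' t + F t * Φ' t + G t * Φ t))) := by ring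
        rw [h1]
        have h2 := hkey t ht'
        have hYt : 0 ≤ Y t := hpos t (Ioo_subset_Icc_self htI)
        exact mul_nonneg (hρpos t).le (mul_nonneg hYt (by linarith))
    have hZ : ∀ r ∈ Icc t₀ b, 0 ≤ deriv Y r * Φ r - Y r * Φ' r := by
      intro r hr
      have h1 : A t₀ ≤ A r := hAmono (left_mem_Icc.mpr hb.1) hr hr.1
      rw [hA0] at h1
      exact (mul_nonneg_iff_of_pos_left (hρpos r)).mp h1
    set g : ℝ → ℝ := fun t => Y t / Φ t with hgdef
    have hgd : ∀ t ∈ Ioo t₀ b, HasDerivAt g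
        ((deriv Y t * Φ t - Y t * Φ' t) / (Φ t) ^ 2) t := by
      intro t htI
      have ht' : t ∈ Icc t₀ T := Ioo_subset_Icc_self (hsubo htI)
      exact ((hY1 t ht').hasDerivAt).div (hΦd t) (hΦpos t ht').ne'
    have hgmono : MonotoneOn g (Icc t₀ b) := by
      apply monotoneOn_of_deriv_nonneg (convex_Icc _ _)
      · exact (hYc.mono hsub).div (hΦc.continuousOn.mono (fun x _ => trivial))
          (fun t htI => (hΦpos t (hsub htI)).ne')
      · intro t htI
        rw [interior_Icc] at htI
        exact ((hgd t htI).differentiableAt).differentiableWithinAt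
      · intro t htI
        rw [interior_Icc] at htI
        rw [(hgd t htI).deriv]
        exact div_nonneg (hZ t (Ioo_subset_Icc_self htI)) (sq_nonneg _)
    intro r hr
    have h1 : g t₀ ≤ g r := hgmono (left_mem_Icc.mpr hb.1) hr hr.1
    have hg0 : g t₀ = 1 := by
      simp only [hgdef]
      rw [hicΦ]
      exact div_self (hΦpos t₀ (left_mem_Icc.mpr ht.le)).ne'
    rw [hg0] at h1
    exact (one_le_div (hΦpos r (hsub hr))).mp h1
  -- Y stays positive on I
  have hYpos : ∀ t ∈ Icc t₀ T, 0 < Y t := by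
    by_contra hcon
    push_neg at hcon
    obtain ⟨t₁, ht₁, hYt₁⟩ := hcon
    set B : Set ℝ := Icc t₀ T ∩ Y ⁻¹' (Iic 0) with hBdef
    have hBclosed : IsClosed B := hYc.preimage_isClosed_of_isClosed isClosed_Icc isClosed_Iic
    have hBne : B.Nonempty := ⟨t₁, ht₁, hYt₁⟩
    have hBbdd : BddBelow B := ⟨t₀, fun x hx => hx.1.1⟩
    set s := sInf B with hsdef
    have hsB : s ∈ B := hBclosed.csInf_mem hBne hBbdd
    have hsI : s ∈ Icc t₀ T := hsB.1
    have hYs : Y s ≤ 0 := hsB.2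
    have hst₀ : t₀ < s := by
      rcases eq_or_lt_of_le hsI.1 with he | h
      · exfalso
        have h0 : 0 < Y s := by rw [← he, hicΦ]; exact hΦpos t₀ (left_mem_Icc.mpr ht.le)
        linarith
      · exact h
    have hpos' : ∀ r ∈ Ico t₀ s, 0 < Y r := by
      intro r hr
      by_contra h
      push_neg at h
      have hrB : r ∈ B := ⟨⟨hr.1, hr.2.le.trans hsI.2⟩, h⟩
      have := csInf_le hBbdd hrB
      rw [← hsdef] at this
      linarith [hr.2]
    have hΦle : ∀ r ∈ Ico t₀ s, Φ r ≤ Y r := by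
      intro r hr
      exact key r ⟨hr.1, hr.2.le.trans hsI.2⟩
        (fun x hx => (hpos' x ⟨hx.1, lt_of_le_of_lt hx.2 hr.2⟩).le) r (right_mem_Icc.mpr hr.1)
    have hconts : ContinuousWithinAt (fun r => Y r - Φ r) (Ico t₀ s) s :=
      (((hYc s hsI).sub (hΦc.continuousWithinAt)).mono
        (fun x hx => ⟨hx.1, hx.2.le.trans hsI.2⟩))
    have hne : (nhdsWithin s (Ico t₀ s)).NeBot := by
      apply mem_closure_iff_nhdsWithin_neBot.mp
      rw [closure_Ico hst₀.ne]
      exact right_mem_Icc.mpr hst₀.le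
    have hlim : 0 ≤ Y s - Φ s := by
      apply ge_of_tendsto hconts.tendsto
      exact eventually_nhdsWithin_of_forall (fun r hr => sub_nonneg.mpr (hΦle r hr))
    have := hΦpos s hsI
    linarith
  intro t htI
  exact key T (right_mem_Icc.mpr ht.le) (fun r hr => (hYpos r hr).le) t htI
end

section
/- Let 0 < t₀ < T, I = [t₀, T], and δ > 0. Let F, G : ℝ → ℝ be continuous on I and μ : ℝ → ℝ twice continuously differentiable with μ(t) > 0 on I. Suppose G(t) ≤ -μ''(t)/μ(t) - 2δ·(μ'(t)/μ(t))·t⁻¹ - δ(δ-1)·t⁻² - (μ'(t)/μ(t) + δ·t⁻¹)·F(t) for all t ∈ I. Then any twice differentiable Y : ℝ → ℝ satisfying Y'' + F(t)Y' + G(t)Y = 0 on I, with Y(t₀) = μ(t₀)·t₀^δ and Y'(t₀) = μ'(t₀)·t₀^δ + δ·μ(t₀)·t₀^(δ-1), satisfies Y(t) ≥ μ(t)·t^δ for all t ∈ I. -/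
open Set Real Filter Topology

private lemma key_comparison (t₀ T : ℝ) (ht : t₀ < T) (F G Φ Y : ℝ → ℝ)
    (hF : ContinuousOn F (Icc t₀ T))
    (hΦpos : ∀ t ∈ Icc t₀ T, 0 < Φ t)
    (hΦ1 : ∀ t ∈ Icc t₀ T, DifferentiableAt ℝ Φ t)
    (hΦ2 : ∀ t ∈ Icc t₀ T, DifferentiableAt ℝ (deriv Φ) t)
    (hLΦ : ∀ t ∈ Ioo t₀ T, deriv (deriv Φ) t + F t * deriv Φ t + G t * Φ t ≤ 0)
    (hY1 : ∀ t ∈ Icc t₀ T, DifferentiableAt ℝ Y t)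
    (hY2 : ∀ t ∈ Icc t₀ T, DifferentiableAt ℝ (deriv Y) t)
    (hODE : ∀ t ∈ Icc t₀ T, deriv (deriv Y) t + F t * deriv Y t + G t * Y t = 0)
    (hic : Y t₀ = Φ t₀) (hic' : deriv Y t₀ = deriv Φ t₀) :
    ∀ t ∈ Icc t₀ T, Φ t ≤ Y t := by
  have ht₀mem : t₀ ∈ Icc t₀ T := ⟨le_rfl, ht.le⟩
  -- continuous extension of F
  set Fc : ℝ → ℝ := fun t => F (min T (max t₀ t)) with hFc_def
  have hFc_cont : Continuous Fc := by
    apply hF.comp_continuous (continuous_const.min (continuous_const.max continuous_id))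
    intro x
    constructor
    · exact le_min ht.le (le_max_left _ _)
    · exact min_le_left _ _
  have hFc_eq : ∀ t ∈ Icc t₀ T, Fc t = F t := by
    intro t htm
    simp only [hFc_def]
    rw [max_eq_right htm.1, min_eq_right htm.2]
  -- integrating factor
  set E : ℝ → ℝ := fun t => Real.exp (∫ s in t₀..t, Fc s) with hE_def
  have hE : ∀ t, HasDerivAt E (E t * Fc t) t := by
    intro t
    exact ((hFc_cont.integral_hasStrictDerivAt t₀ t).hasDerivAt).exp
  have hEpos : ∀ t, 0 < E t := fun t => Real.exp_pos _
  have hEcont : Continuous E := by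
    have : Differentiable ℝ E := fun t => (hE t).differentiableAt
    exact this.continuous
  -- Wronskian
  set W : ℝ → ℝ := fun t => deriv Y t * Φ t - Y t * deriv Φ t with hW_def
  have hWcont : ∀ t ∈ Icc t₀ T, ContinuousAt W t := by
    intro t htm
    exact ((hY2 t htm).continuousAt.mul (hΦ1 t htm).continuousAt).sub
      ((hY1 t htm).continuousAt.mul (hΦ2 t htm).continuousAt)
  have hW0 : W t₀ = 0 := by simp only [hW_def, hic, hic']; ring
  have hWd : ∀ t ∈ Ioo t₀ T, HasDerivAt W
      (deriv (deriv Y) t * Φ t - Y t * deriv (deriv Φ) t) t := by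
    intro t htm
    have hm : t ∈ Icc t₀ T := Ioo_subset_Icc_self htm
    have h1 := ((hY2 t hm).hasDerivAt.mul (hΦ1 t hm).hasDerivAt).sub
      ((hY1 t hm).hasDerivAt.mul (hΦ2 t hm).hasDerivAt)
    refine h1.congr_deriv ?_
    ring
  set Z : ℝ → ℝ := fun t => E t * W t with hZ_def
  have hZ0 : Z t₀ = 0 := by simp [hZ_def, hW0]
  have hZd : ∀ t ∈ Ioo t₀ T, HasDerivAt Z
      (E t * (Fc t * W t + (deriv (deriv Y) t * Φ t - Y t * deriv (deriv Φ) t))) t := by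
    intro t htm
    have h1 := (hE t).mul (hWd t htm)
    refine h1.congr_deriv ?_
    ring
  -- key claim
  have hclaim : ∀ c ∈ Icc t₀ T, (∀ s ∈ Icc t₀ c, 0 ≤ Y s) → ∀ s ∈ Icc t₀ c, Φ s ≤ Y s := by
    intro c hc hYnn
    have hsub : Icc t₀ c ⊆ Icc t₀ T := Icc_subset_Icc_right hc.2
    have hsubo : Ioo t₀ c ⊆ Ioo t₀ T := Ioo_subset_Ioo_right hc.2
    have hZmono : MonotoneOn Z (Icc t₀ c) := by
      apply monotoneOn_of_deriv_nonneg (convex_Icc _ _)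
      · intro s hs
        exact (hEcont.continuousAt.mul (hWcont s (hsub hs))).continuousWithinAt
      · intro s hs
        rw [interior_Icc] at hs
        exact ((hZd s (hsubo hs)).differentiableAt).differentiableWithinAt
      · intro s hs
        rw [interior_Icc] at hs
        rw [(hZd s (hsubo hs)).deriv]
        have hsI : s ∈ Icc t₀ T := hsub (Ioo_subset_Icc_self hs)
        have hsIc : s ∈ Icc t₀ c := Ioo_subset_Icc_self hs
        have hkey : Fc s * W s + (deriv (deriv Y) s * Φ s - Y s * deriv (deriv Φ) s)
            = Y s * (-(deriv (deriv Φ) s + F s * deriv Φ s + G s * Φ s)) := by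
          rw [hFc_eq s hsI]
          simp only [hW_def]
          linear_combination (Φ s) * (hODE s hsI)
        rw [hkey]
        exact mul_nonneg (hEpos s).le
          (mul_nonneg (hYnn s hsIc) (neg_nonneg.mpr (hLΦ s (hsubo hs))))
    have hWnn : ∀ s ∈ Icc t₀ c, 0 ≤ W s := by
      intro s hs
      have h1 : (0:ℝ) ≤ Z s := by
        have := hZmono ⟨le_rfl, hc.1⟩ hs hs.1
        rwa [hZ0] at this
      simp only [hZ_def] at h1
      nlinarith [hEpos s, h1]
    have hvmono : MonotoneOn (fun t => Y t / Φ t) (Icc t₀ c) := by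
      apply monotoneOn_of_deriv_nonneg (convex_Icc _ _)
      · intro s hs
        exact ((hY1 s (hsub hs)).continuousAt.div (hΦ1 s (hsub hs)).continuousAt
          (ne_of_gt (hΦpos s (hsub hs)))).continuousWithinAt
      · intro s hs
        rw [interior_Icc] at hs
        have hsI := hsub (Ioo_subset_Icc_self hs)
        exact ((hY1 s hsI).div (hΦ1 s hsI) (ne_of_gt (hΦpos s hsI))).differentiableWithinAt
      · intro s hs
        rw [interior_Icc] at hs
        have hsI := hsub (Ioo_subset_Icc_self hs)
        have hd : HasDerivAt (fun t => Y t / Φ t)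
            ((deriv Y s * Φ s - Y s * deriv Φ s) / Φ s ^ 2) s :=
          (hY1 s hsI).hasDerivAt.div (hΦ1 s hsI).hasDerivAt (ne_of_gt (hΦpos s hsI))
        rw [hd.deriv]
        exact div_nonneg (hWnn s (Ioo_subset_Icc_self hs)) (sq_nonneg _)
    intro s hs
    have h1 : Y t₀ / Φ t₀ ≤ Y s / Φ s := hvmono ⟨le_rfl, hc.1⟩ hs hs.1
    have h2 : Y t₀ / Φ t₀ = 1 := by
      rw [hic]; exact div_self (ne_of_gt (hΦpos t₀ ht₀mem))
    rw [h2] at h1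
    exact (one_le_div (hΦpos s (hsub hs))).mp h1
  -- bootstrap
  set S : Set ℝ := {t | t ∈ Icc t₀ T ∧ ∀ s ∈ Icc t₀ t, Φ s ≤ Y s} with hS_def
  have ht₀S : t₀ ∈ S := by
    refine ⟨ht₀mem, fun s hs => ?_⟩
    have : s = t₀ := le_antisymm hs.2 hs.1
    rw [this, hic]
  have hSne : S.Nonempty := ⟨t₀, ht₀S⟩
  have hSbdd : BddAbove S := ⟨T, fun x hx => hx.1.2⟩
  set c := sSup S with hc_def
  have hc1 : t₀ ≤ c := le_csSup hSbdd ht₀S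
  have hc2 : c ≤ T := csSup_le hSne (fun x hx => hx.1.2)
  have hcI : c ∈ Icc t₀ T := ⟨hc1, hc2⟩
  have hIco : ∀ s ∈ Ico t₀ c, Φ s ≤ Y s := by
    intro s hs
    obtain ⟨x, hxS, hsx⟩ := exists_lt_of_lt_csSup hSne hs.2
    exact hxS.2 s ⟨hs.1, hsx.le⟩
  have hcY : Φ c ≤ Y c := by
    rcases eq_or_lt_of_le hc1 with heq | hlt
    · rw [← heq, hic]
    · have hcont : ContinuousAt (fun t => Y t - Φ t) c :=
        (hY1 c hcI).continuousAt.sub (hΦ1 c hcI).continuousAt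
      have hne : (𝓝[<] c).NeBot := by
        exact nhdsLT_neBot c
      have hev : ∀ᶠ s in 𝓝[<] c, 0 ≤ Y s - Φ s := by
        have h1 : ∀ᶠ s in 𝓝[<] c, s ∈ Ioi t₀ := by
          apply eventually_nhdsWithin_of_eventually_nhds
          exact Filter.eventually_of_mem (Ioi_mem_nhds hlt) (fun x hx => hx)
        have h2 : ∀ᶠ s in 𝓝[<] c, s < c := eventually_mem_nhdsWithin
        filter_upwards [h1, h2] with s hs1 hs2
        have := hIco s ⟨le_of_lt hs1, hs2⟩
        linarith
      have htend : Filter.Tendsto (fun t => Y t - Φ t) (𝓝[<] c) (𝓝 (Y c - Φ c)) :=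
        hcont.continuousWithinAt.tendsto
      have := ge_of_tendsto htend hev
      linarith
  have hcmem : ∀ s ∈ Icc t₀ c, Φ s ≤ Y s := by
    intro s hs
    rcases eq_or_lt_of_le hs.2 with heq | hlt
    · rw [heq]; exact hcY
    · exact hIco s ⟨hs.1, hlt⟩
  have hceq : c = T := by
    by_contra hne
    have hcltT : c < T := lt_of_le_of_ne hc2 hne
    have hYc : 0 < Y c := lt_of_lt_of_le (hΦpos c hcI) hcY
    have hmem : Y ⁻¹' (Ioi 0) ∈ 𝓝 c := (hY1 c hcI).continuousAt (isOpen_Ioi.mem_nhds hYc)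
    obtain ⟨ε, hεpos, hball⟩ := Metric.mem_nhds_iff.mp hmem
    set d := min (ε / 2) (T - c) with hd_def
    have hdpos : 0 < d := lt_min (by linarith) (by linarith)
    have hcdT : c + d ≤ T := by
      have : d ≤ T - c := min_le_right _ _
      linarith
    have hcdI : c + d ∈ Icc t₀ T := ⟨by linarith, hcdT⟩
    have hYpos : ∀ s ∈ Icc c (c + d), 0 < Y s := by
      intro s hs
      apply hball
      simp only [Metric.mem_ball, Real.dist_eq]
      have h1 : d ≤ ε / 2 := min_le_left _ _
      have := hs.1; have := hs.2
      rw [abs_lt]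
      constructor <;> linarith
    have hYnn : ∀ s ∈ Icc t₀ (c + d), 0 ≤ Y s := by
      intro s hs
      rcases le_or_gt s c with h | h
      · exact le_trans (hΦpos s ⟨hs.1, le_trans h hc2⟩).le (hcmem s ⟨hs.1, h⟩)
      · exact (hYpos s ⟨h.le, hs.2⟩).le
    have : c + d ∈ S := ⟨hcdI, hclaim (c + d) hcdI hYnn⟩
    have : c + d ≤ c := le_csSup hSbdd this
    linarith
  intro t htm
  exact hcmem t (by rw [hceq]; exact htm)

/-- Corollary 2: with comparison function `Φ(t) = μ(t)·t^δ` (real power), the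
coefficient inequality forces a solution of `Y'' + F·Y' + G·Y = 0` with matching
initial data to grow at least like `μ(t)·t^δ` on `I = [t₀, T]`, `t₀ > 0`. -/
theorem comparison_algebraic_growth
    (t₀ T δ : ℝ) (ht₀ : 0 < t₀) (ht : t₀ < T) (hδ : 0 < δ)
    (F G μ Y : ℝ → ℝ)
    (hF : ContinuousOn F (Icc t₀ T))
    (hG : ContinuousOn G (Icc t₀ T))
    (hμ : ContDiff ℝ 2 μ)
    (hμpos : ∀ t ∈ Icc t₀ T, 0 < μ t)
    (hGle : ∀ t ∈ Icc t₀ T,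
      G t ≤ -(deriv (deriv μ) t) / μ t - 2 * δ * (deriv μ t / μ t) * t⁻¹
        - δ * (δ - 1) * (t ^ 2)⁻¹ - (deriv μ t / μ t + δ * t⁻¹) * F t)
    (hY1 : ∀ t ∈ Icc t₀ T, DifferentiableAt ℝ Y t)
    (hY2 : ∀ t ∈ Icc t₀ T, DifferentiableAt ℝ (deriv Y) t)
    (hODE : ∀ t ∈ Icc t₀ T,
      deriv (deriv Y) t + F t * deriv Y t + G t * Y t = 0)
    (hic : Y t₀ = μ t₀ * t₀ ^ δ)
    (hic' : deriv Y t₀ = deriv μ t₀ * t₀ ^ δ + δ * μ t₀ * t₀ ^ (δ - 1)) :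
    ∀ t ∈ Icc t₀ T, μ t * t ^ δ ≤ Y t := by
  have hμ1 : Differentiable ℝ μ := hμ.differentiable (by norm_num)
  have hμ2' : ContDiff ℝ 1 (deriv μ) := by
    have h2 : ContDiff ℝ (1 + 1 : ℕ) μ := by exact_mod_cast hμ
    exact (contDiff_succ_iff_deriv.mp (by exact_mod_cast h2)).2.2
  have hμ2 : Differentiable ℝ (deriv μ) := hμ2'.differentiable one_ne_zero
  set Φ : ℝ → ℝ := fun t => μ t * t ^ δ with hΦ_def
  set Φ₁ : ℝ → ℝ := fun t => deriv μ t * t ^ δ + μ t * (δ * t ^ (δ - 1)) with hΦ₁_def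
  set Φ₂ : ℝ → ℝ := fun t => deriv (deriv μ) t * t ^ δ + 2 * δ * deriv μ t * t ^ (δ - 1)
    + δ * (δ - 1) * μ t * t ^ (δ - 2) with hΦ₂_def
  have hΦd : ∀ t ∈ Ioi (0:ℝ), HasDerivAt Φ (Φ₁ t) t := by
    intro t htpos
    exact (hμ1 t).hasDerivAt.mul (Real.hasDerivAt_rpow_const (Or.inl (ne_of_gt htpos)))
  have hderivΦ : ∀ t ∈ Ioi (0:ℝ), deriv Φ t = Φ₁ t := fun t htpos => (hΦd t htpos).deriv
  have hΦ₁d : ∀ t ∈ Ioi (0:ℝ), HasDerivAt Φ₁ (Φ₂ t) t := by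
    intro t htpos
    have h1 : HasDerivAt (fun t => deriv μ t * t ^ δ)
        (deriv (deriv μ) t * t ^ δ + deriv μ t * (δ * t ^ (δ - 1))) t :=
      (hμ2 t).hasDerivAt.mul (Real.hasDerivAt_rpow_const (Or.inl (ne_of_gt htpos)))
    have h2 : HasDerivAt (fun t => μ t * (δ * t ^ (δ - 1)))
        (deriv μ t * (δ * t ^ (δ - 1)) + μ t * (δ * ((δ - 1) * t ^ (δ - 1 - 1)))) t :=
      (hμ1 t).hasDerivAt.mul
        ((Real.hasDerivAt_rpow_const (Or.inl (ne_of_gt htpos))).const_mul δ)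
    have h3 := h1.add h2
    refine h3.congr_deriv ?_
    have he : δ - 1 - 1 = δ - 2 := by ring
    simp only [hΦ₂_def, he]
    ring
  have hderivΦ₁ : ∀ t ∈ Ioi (0:ℝ), deriv (deriv Φ) t = Φ₂ t := by
    intro t htpos
    have hev : deriv Φ =ᶠ[nhds t] Φ₁ := by
      filter_upwards [isOpen_Ioi.mem_nhds htpos] with s hs
      exact hderivΦ s hs
    rw [hev.deriv_eq]
    exact (hΦ₁d t htpos).deriv
  have hIccpos : ∀ t ∈ Icc t₀ T, (0:ℝ) < t := fun t htm => lt_of_lt_of_le ht₀ htm.1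
  have hΦpos : ∀ t ∈ Icc t₀ T, 0 < Φ t := fun t htm =>
    mul_pos (hμpos t htm) (Real.rpow_pos_of_pos (hIccpos t htm) δ)
  have hΦ1 : ∀ t ∈ Icc t₀ T, DifferentiableAt ℝ Φ t := fun t htm =>
    (hΦd t (hIccpos t htm)).differentiableAt
  have hΦ2 : ∀ t ∈ Icc t₀ T, DifferentiableAt ℝ (deriv Φ) t := by
    intro t htm
    have htpos := hIccpos t htm
    have hev : deriv Φ =ᶠ[nhds t] Φ₁ := by
      filter_upwards [isOpen_Ioi.mem_nhds htpos] with s hs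
      exact hderivΦ s hs
    rw [hev.differentiableAt_iff]
    exact (hΦ₁d t htpos).differentiableAt
  have hLΦ : ∀ t ∈ Ioo t₀ T, deriv (deriv Φ) t + F t * deriv Φ t + G t * Φ t ≤ 0 := by
    intro t htm
    have htI : t ∈ Icc t₀ T := Ioo_subset_Icc_self htm
    have htpos : (0:ℝ) < t := hIccpos t htI
    rw [hderivΦ₁ t htpos, hderivΦ t htpos]
    have hμt : 0 < μ t := hμpos t htI
    have hA : (0:ℝ) < t ^ δ := Real.rpow_pos_of_pos htpos δ
    have hBe : t ^ (δ - 1) = t ^ δ / t := by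
      rw [Real.rpow_sub htpos, Real.rpow_one]
    have hCe : t ^ (δ - 2) = t ^ δ / t ^ 2 := by
      rw [Real.rpow_sub htpos, show (2:ℝ) = ((2:ℕ):ℝ) by norm_num, Real.rpow_natCast]
    have hGt := hGle t htI
    have hident : Φ₂ t + F t * Φ₁ t + G t * Φ t
        = (μ t * t ^ δ) * (G t - (-(deriv (deriv μ) t) / μ t
          - 2 * δ * (deriv μ t / μ t) * t⁻¹ - δ * (δ - 1) * (t ^ 2)⁻¹
          - (deriv μ t / μ t + δ * t⁻¹) * F t)) := by
      simp only [hΦ_def, hΦ₁_def, hΦ₂_def]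
      rw [hBe, hCe]
      field_simp
      ring
    rw [hident]
    have h1 : 0 ≤ μ t * t ^ δ := (mul_pos hμt hA).le
    nlinarith [h1, sub_nonpos.mpr hGt]
  have hic2 : Y t₀ = Φ t₀ := hic
  have hic2' : deriv Y t₀ = deriv Φ t₀ := by
    rw [hic', hderivΦ t₀ ht₀]
    simp only [hΦ₁_def]
    ring
  exact key_comparison t₀ T ht F G Φ Y hF hΦpos hΦ1 hΦ2 hLΦ hY1 hY2 hODE hic2 hic2'
end

section
/- Let t₀ < T and I = [t₀, T]. Let d₁, d₂ > 0, let ρ : ℝ → ℝ be continuously differentiable on I, let μ : ℝ → ℝ be twice continuously differentiable with μ(t) > 0 on I, and let J₁₁, J₁₂, J₂₁, J₂₂ : ℝ → ℝ be continuously differentiable on I with J₁₂(t) ≠ 0 for all t ∈ I. Write det J = J₁₁J₂₂ - J₁₂J₂₁ and tr J = J₁₁ + J₂₂. Suppose that for all t ∈ I: det J(t) - (d₂J₁₁(t) + d₁J₂₂(t))ρ(t) + d₁d₂ρ(t)² < -μ''(t)/μ(t) - (μ'(t)/μ(t))·[(d₁+d₂)ρ(t) - tr J(t) - J₁₂'(t)/J₁₂(t)]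 - J₁₂(t)·(d/dt)((d₁ρ(t) - J₁₁(t))/J₁₂(t)). Then any differentiable pair V₁, V₂ : ℝ → ℝ satisfying V₁' = -d₁ρ(t)V₁ + J₁₁(t)V₁ + J₁₂(t)V₂ and V₂' = -d₂ρ(t)V₂ + J₂₁(t)V₁ + J₂₂(t)V₂ on I, with V₁(t₀) = μ(t₀) and -d₁ρ(t₀)μ(t₀) + J₁₁(t₀)μ(t₀) + J₁₂(t₀)V₂(t₀) = μ'(t₀), satisfies V₁(t) ≥ μ(t) for all t ∈ I. -/
open Set


/-- Auxiliary comparison lemma: if `Wr` satisfies `Wr' = p·Wr + c·V₁` with `c > 0`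
on `[t₀,T]`, `Wr t₀ = 0`, `Wr = V₁'μ - V₁μ'` on the interval, and `V₁ t₀ = μ t₀`
with `μ > 0`, then `V₁ ≥ μ` on the interval. -/
lemma turing_aux_comparison (t₀ T : ℝ) (ht : t₀ < T)
    (Wr p c V₁ μ : ℝ → ℝ)
    (hpc : ContinuousOn p (Icc t₀ T))
    (hWrd : ∀ t ∈ Icc t₀ T, HasDerivAt Wr (p t * Wr t + c t * V₁ t) t)
    (hc : ∀ t ∈ Icc t₀ T, 0 < c t)
    (hWr0 : Wr t₀ = 0)
    (hμpos : ∀ t ∈ Icc t₀ T, 0 < μ t)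
    (hμd : ∀ t ∈ Icc t₀ T, DifferentiableAt ℝ μ t)
    (hV₁d : ∀ t ∈ Icc t₀ T, DifferentiableAt ℝ V₁ t)
    (hWreq : ∀ t ∈ Icc t₀ T, Wr t = deriv V₁ t * μ t - V₁ t * deriv μ t)
    (hic : V₁ t₀ = μ t₀) :
    ∀ t ∈ Icc t₀ T, μ t ≤ V₁ t := by
  have ht₀I : t₀ ∈ Icc t₀ T := ⟨le_rfl, ht.le⟩
  -- continuous extension of p to all of ℝ via projection onto the interval
  set proj : ℝ → ℝ := fun s => max t₀ (min s T) with hprojdef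
  have hprojcont : Continuous proj := continuous_const.max (continuous_id.min continuous_const)
  have hprojmaps : ∀ s, proj s ∈ Icc t₀ T := fun s =>
    ⟨le_max_left _ _, max_le ht.le (min_le_right _ _)⟩
  have hprojeq : ∀ t ∈ Icc t₀ T, proj t = t := by
    intro t htI
    simp only [hprojdef]
    rw [min_eq_left htI.2, max_eq_right htI.1]
  set pt : ℝ → ℝ := fun s => p (proj s) with hptdef
  have hptcont : Continuous pt := hpc.comp_continuous hprojcont hprojmaps
  have hpteq : ∀ t ∈ Icc t₀ T, pt t = p t := fun t htI => by
    simp only [hptdef]; rw [hprojeq t htI]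
  -- integrating factor
  set P : ℝ → ℝ := fun s => ∫ u in t₀..s, pt u with hPdef
  have hP : ∀ s, HasDerivAt P (pt s) s := by
    intro s
    exact intervalIntegral.integral_hasDerivAt_right
      (hptcont.intervalIntegrable _ _)
      (hptcont.stronglyMeasurableAtFilter _ _)
      hptcont.continuousAt
  set G : ℝ → ℝ := fun s => Real.exp (-P s) * Wr s with hGdef
  have hG : ∀ t ∈ Icc t₀ T, HasDerivAt G (Real.exp (-P t) * (c t * V₁ t)) t := by
    intro t htI
    have hexp : HasDerivAt (fun s => Real.exp (-P s)) (Real.exp (-P t) * (-pt t)) t :=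
      (hP t).neg.exp
    have h := hexp.mul (hWrd t htI)
    have he : Real.exp (-P t) * (-pt t) * Wr t
        + Real.exp (-P t) * (p t * Wr t + c t * V₁ t)
        = Real.exp (-P t) * (c t * V₁ t) := by
      rw [hpteq t htI]; ring
    rw [he] at h
    exact h
  have hGc : ContinuousOn G (Icc t₀ T) := fun t htI =>
    ((hG t htI).differentiableAt.continuousAt).continuousWithinAt
  have hG0 : G t₀ = 0 := by
    simp only [hGdef, hWr0, mul_zero]
  -- key step
  have key : ∀ t₁ ∈ Icc t₀ T, t₀ < t₁ → (∀ s ∈ Ioo t₀ t₁, 0 < V₁ s) → μ t₁ ≤ V₁ t₁ := by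
    intro t₁ ht₁I hlt hpos
    have hsub : Icc t₀ t₁ ⊆ Icc t₀ T := Icc_subset_Icc le_rfl ht₁I.2
    have hGm : MonotoneOn G (Icc t₀ t₁) := by
      apply monotoneOn_of_deriv_nonneg (convex_Icc _ _) (hGc.mono hsub)
      · intro x hx
        rw [interior_Icc] at hx
        exact (hG x (hsub (Ioo_subset_Icc_self hx))).differentiableAt.differentiableWithinAt
      · intro x hx
        rw [interior_Icc] at hx
        have hxI := hsub (Ioo_subset_Icc_self hx)
        rw [(hG x hxI).deriv]
        have h1 := hc x hxI
        have h2 := hpos x hx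
        positivity
    have hWrnn : ∀ s ∈ Ioo t₀ t₁, 0 ≤ Wr s := by
      intro s hs
      have h0 : G t₀ ≤ G s := hGm ⟨le_rfl, hlt.le⟩ (Ioo_subset_Icc_self hs) hs.1.le
      rw [hG0] at h0
      simp only [hGdef] at h0
      nlinarith [Real.exp_pos (-P s)]
    have hF : MonotoneOn (fun s => V₁ s / μ s) (Icc t₀ t₁) := by
      apply monotoneOn_of_deriv_nonneg (convex_Icc _ _)
      · exact ContinuousOn.div
          (fun s hs => (hV₁d s (hsub hs)).continuousAt.continuousWithinAt)
          (fun s hs => (hμd s (hsub hs)).continuousAt.continuousWithinAt)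
          (fun s hs => (hμpos s (hsub hs)).ne')
      · intro x hx
        rw [interior_Icc] at hx
        have hxI := hsub (Ioo_subset_Icc_self hx)
        exact ((hV₁d x hxI).div (hμd x hxI) (hμpos x hxI).ne').differentiableWithinAt
      · intro x hx
        rw [interior_Icc] at hx
        have hxI := hsub (Ioo_subset_Icc_self hx)
        have hdiv := (hV₁d x hxI).hasDerivAt.div (hμd x hxI).hasDerivAt (hμpos x hxI).ne'
        rw [show (fun s => V₁ s / μ s) = V₁ / μ from rfl, hdiv.deriv]
        have hnn := hWrnn x hx
        rw [hWreq x hxI] at hnn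
        have hmx := hμpos x hxI
        have hm2 : (0:ℝ) < μ x ^ 2 := by positivity
        exact div_nonneg hnn hm2.le
    have h1 : V₁ t₀ / μ t₀ ≤ V₁ t₁ / μ t₁ :=
      hF ⟨le_rfl, hlt.le⟩ ⟨hlt.le, le_rfl⟩ hlt.le
    rw [hic, div_self (hμpos t₀ ht₀I).ne'] at h1
    exact ((one_le_div (hμpos t₁ ht₁I)).mp h1)
  -- positivity of V₁ on the interval
  have hVpos : ∀ t ∈ Icc t₀ T, 0 < V₁ t := by
    by_contra hcon
    push_neg at hcon
    obtain ⟨t₁', ht₁'I, ht₁'⟩ := hcon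
    set S : Set ℝ := Icc t₀ T ∩ V₁ ⁻¹' (Iic 0) with hSdef
    have hScl : IsClosed S :=
      ContinuousOn.preimage_isClosed_of_isClosed
        (fun s hs => (hV₁d s hs).continuousAt.continuousWithinAt) isClosed_Icc isClosed_Iic
    have hSne : S.Nonempty := ⟨t₁', ht₁'I, ht₁'⟩
    have hSbdd : BddBelow S := ⟨t₀, fun s hs => hs.1.1⟩
    set t₁ := sInf S with ht₁def
    have ht₁S : t₁ ∈ S := hScl.csInf_mem hSne hSbdd
    have ht₁I : t₁ ∈ Icc t₀ T := ht₁S.1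
    have hV₁t₁ : V₁ t₁ ≤ 0 := ht₁S.2
    have hlt : t₀ < t₁ := by
      rcases lt_or_eq_of_le ht₁I.1 with h | h
      · exact h
      · exfalso
        have := hμpos t₀ ht₀I
        rw [← h] at hV₁t₁
        rw [hic] at hV₁t₁
        linarith
    have hpos : ∀ s ∈ Ioo t₀ t₁, 0 < V₁ s := by
      intro s hs
      by_contra hns
      push_neg at hns
      have hsS : s ∈ S := ⟨⟨hs.1.le, hs.2.le.trans ht₁I.2⟩, hns⟩
      have := csInf_le hSbdd hsS
      rw [← ht₁def] at this
      exact absurd this (not_le.mpr hs.2)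
    have := key t₁ ht₁I hlt hpos
    have := hμpos t₁ ht₁I
    linarith
  -- conclude
  intro t htI
  rcases eq_or_lt_of_le htI.1 with h | h
  · rw [← h, hic]
  · exact key t htI h fun s hs => hVpos s ⟨hs.1.le, hs.2.le.trans htI.2⟩

/-- Theorem 3, first branch (the J₁₂-branch, inequality (T31)): generalized
Turing instability condition for a two-species reaction-diffusion system on an
evolving domain. Under the differential inequality, the component `V₁` of the
linearized perturbation grows at least as fast as the volume factor `μ`. -/
theorem turing_instability_J12_branch
    (t₀ T : ℝ) (ht : t₀ < T)
    (d₁ d₂ : ℝ) (hd₁ : 0 < d₁) (hd₂ : 0 < d₂)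
    (ρ μ J₁₁ J₁₂ J₂₁ J₂₂ V₁ V₂ : ℝ → ℝ)
    (hρd : ∀ t ∈ Icc t₀ T, DifferentiableAt ℝ ρ t)
    (hρc : ContinuousOn (deriv ρ) (Icc t₀ T))
    (hμ : ContDiff ℝ 2 μ)
    (hμpos : ∀ t ∈ Icc t₀ T, 0 < μ t)
    (hJ₁₁d : ∀ t ∈ Icc t₀ T, DifferentiableAt ℝ J₁₁ t)
    (hJ₁₁c : ContinuousOn (deriv J₁₁) (Icc t₀ T))
    (hJ₁₂d : ∀ t ∈ Icc t₀ T, DifferentiableAt ℝ J₁₂ t)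
    (hJ₁₂c : ContinuousOn (deriv J₁₂) (Icc t₀ T))
    (hJ₂₁d : ∀ t ∈ Icc t₀ T, DifferentiableAt ℝ J₂₁ t)
    (hJ₂₁c : ContinuousOn (deriv J₂₁) (Icc t₀ T))
    (hJ₂₂d : ∀ t ∈ Icc t₀ T, DifferentiableAt ℝ J₂₂ t)
    (hJ₂₂c : ContinuousOn (deriv J₂₂) (Icc t₀ T))
    (hJ₁₂ne : ∀ t ∈ Icc t₀ T, J₁₂ t ≠ 0)
    (hineq : ∀ t ∈ Icc t₀ T,
      J₁₁ t * J₂₂ t - J₁₂ t * J₂₁ t - (d₂ * J₁₁ t + d₁ * J₂₂ t) * ρ t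
          + d₁ * d₂ * (ρ t) ^ 2
        < -(deriv (deriv μ) t) / μ t
          - (deriv μ t / μ t)
            * ((d₁ + d₂) * ρ t - (J₁₁ t + J₂₂ t) - deriv J₁₂ t / J₁₂ t)
          - J₁₂ t * deriv (fun s => (d₁ * ρ s - J₁₁ s) / J₁₂ s) t)
    (hV₁d : ∀ t ∈ Icc t₀ T, DifferentiableAt ℝ V₁ t)
    (hV₂d : ∀ t ∈ Icc t₀ T, DifferentiableAt ℝ V₂ t)
    (hODE₁ : ∀ t ∈ Icc t₀ T,
      deriv V₁ t = -(d₁ * ρ t) * V₁ t + J₁₁ t * V₁ t + J₁₂ t * V₂ t)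
    (hODE₂ : ∀ t ∈ Icc t₀ T,
      deriv V₂ t = -(d₂ * ρ t) * V₂ t + J₂₁ t * V₁ t + J₂₂ t * V₂ t)
    (hic : V₁ t₀ = μ t₀)
    (hic' : -(d₁ * ρ t₀) * μ t₀ + J₁₁ t₀ * μ t₀ + J₁₂ t₀ * V₂ t₀ = deriv μ t₀) :
    ∀ t ∈ Icc t₀ T, μ t ≤ V₁ t := by
  -- regularity of μ
  have hμ2 : ContDiff ℝ (1 + 1 : ℕ) μ := by exact_mod_cast hμ
  have hμs := (contDiff_succ_iff_deriv (n := 1)).mp (by exact_mod_cast hμ2)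
  have hμdiff : Differentiable ℝ μ := hμs.1
  have hμ1 : ContDiff ℝ 1 (deriv μ) := hμs.2.2
  have hμ'd : Differentiable ℝ (deriv μ) := (contDiff_one_iff_deriv.mp hμ1).1
  -- continuity on the interval
  have hcρ : ContinuousOn ρ (Icc t₀ T) :=
    fun t htI => (hρd t htI).continuousAt.continuousWithinAt
  have hcJ₁₁ : ContinuousOn J₁₁ (Icc t₀ T) :=
    fun t htI => (hJ₁₁d t htI).continuousAt.continuousWithinAt
  have hcJ₁₂ : ContinuousOn J₁₂ (Icc t₀ T) :=
    fun t htI => (hJ₁₂d t htI).continuousAt.continuousWithinAt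
  have hcJ₂₂ : ContinuousOn J₂₂ (Icc t₀ T) :=
    fun t htI => (hJ₂₂d t htI).continuousAt.continuousWithinAt
  -- apply the comparison lemma
  refine turing_aux_comparison t₀ T ht
    (fun t => (-(d₁ * ρ t) * V₁ t + J₁₁ t * V₁ t + J₁₂ t * V₂ t) * μ t - V₁ t * deriv μ t)
    (fun t => J₁₁ t + J₂₂ t - (d₁ + d₂) * ρ t + deriv J₁₂ t / J₁₂ t)
    (fun t => (J₁₁ t + J₂₂ t - (d₁ + d₂) * ρ t + deriv J₁₂ t / J₁₂ t) * deriv μ t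
      - (J₁₁ t * J₂₂ t - J₁₂ t * J₂₁ t - (d₂ * J₁₁ t + d₁ * J₂₂ t) * ρ t
          + d₁ * d₂ * (ρ t) ^ 2
          + J₁₂ t * deriv (fun s => (d₁ * ρ s - J₁₁ s) / J₁₂ s) t) * μ t
      - deriv (deriv μ) t)
    V₁ μ ?_ ?_ ?_ ?_ hμpos (fun t _ => hμdiff t) hV₁d ?_ hic
  · -- continuity of p
    exact ((hcJ₁₁.add hcJ₂₂).sub (continuousOn_const.mul hcρ)).add
      (hJ₁₂c.div hcJ₁₂ hJ₁₂ne)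
  · -- derivative of Wr
    intro t htI
    have hρ' := (hρd t htI).hasDerivAt
    have hJ₁₁' := (hJ₁₁d t htI).hasDerivAt
    have hJ₁₂' := (hJ₁₂d t htI).hasDerivAt
    have hV₁' := (hV₁d t htI).hasDerivAt
    have hV₂' := (hV₂d t htI).hasDerivAt
    have hμ' := (hμdiff t).hasDerivAt
    have hμ'' := (hμ'd t).hasDerivAt
    have hb := hJ₁₂ne t htI
    have hquot : HasDerivAt (fun s => (d₁ * ρ s - J₁₁ s) / J₁₂ s)
        (((d₁ * deriv ρ t - deriv J₁₁ t) * J₁₂ t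
          - (d₁ * ρ t - J₁₁ t) * deriv J₁₂ t) / (J₁₂ t) ^ 2) t :=
      ((hρ'.const_mul d₁).sub hJ₁₁').div hJ₁₂' hb
    have hraw := ((((((hρ'.const_mul d₁).neg.mul hV₁').add (hJ₁₁'.mul hV₁')).add
      (hJ₁₂'.mul hV₂')).mul hμ').sub (hV₁'.mul hμ''))
    refine hraw.congr_deriv ?_
    simp only [Pi.neg_apply, Pi.add_apply, Pi.mul_apply, hquot.deriv, hODE₁ t htI, hODE₂ t htI]
    field_simp
    ring
  · -- positivity of c
    intro t htI
    have hm := hμpos t htI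
    have hb := hJ₁₂ne t htI
    have h1 := hineq t htI
    have h2 := mul_lt_mul_of_pos_right h1 hm
    have e : (-(deriv (deriv μ) t) / μ t
        - deriv μ t / μ t * ((d₁ + d₂) * ρ t - (J₁₁ t + J₂₂ t) - deriv J₁₂ t / J₁₂ t)
        - J₁₂ t * deriv (fun s => (d₁ * ρ s - J₁₁ s) / J₁₂ s) t) * μ t
        = -(deriv (deriv μ) t)
          - deriv μ t * ((d₁ + d₂) * ρ t - (J₁₁ t + J₂₂ t) - deriv J₁₂ t / J₁₂ t)
          - J₁₂ t * deriv (fun s => (d₁ * ρ s - J₁₁ s) / J₁₂ s) t * μ t := by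
      field_simp
    rw [e] at h2
    nlinarith [h2]
  · -- Wr t₀ = 0
    simp only [hic, hic']
    ring
  · -- Wr = V₁'μ - V₁μ' on the interval
    intro t htI
    simp only [hODE₁ t htI]
end

section
/- Let t₀ < T and I = [t₀, T]. Let d₁, d₂ > 0, let ρ : ℝ → ℝ be continuously differentiable on I, let μ : ℝ → ℝ be twice continuously differentiable with μ(t) > 0 on I, and let J₁₁, J₁₂, J₂₁, J₂₂ : ℝ → ℝ be continuously differentiable on I with J₂₁(t) ≠ 0 for all t ∈ I. Write det J = J₁₁J₂₂ - J₁₂J₂₁ and tr J = J₁₁ + J₂₂. Suppose that for all t ∈ I: det J(t) - (d₂J₁₁(t) + d₁J₂₂(t))ρ(t) + d₁d₂ρ(t)² < -μ''(t)/μ(t) - (μ'(t)/μ(t))·[(d₁+d₂)ρ(t) - tr J(t) - J₂₁'(t)/J₂₁(t)] - J₂₁(t)·(d/dt)((d₂ρ(t) - J₂₂(t))/J₂₁(t)). Then any differentiable pair V₁, V₂ : ℝ → ℝ satisfying V₁' = -d₁ρ(t)V₁ + J₁₁(t)V₁ + J₁₂(t)V₂ and V₂' = -d₂ρ(t)V₂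 + J₂₁(t)V₁ + J₂₂(t)V₂ on I, with V₂(t₀) = μ(t₀) and -d₂ρ(t₀)μ(t₀) + J₂₁(t₀)V₁(t₀) + J₂₂(t₀)μ(t₀) = μ'(t₀), satisfies V₂(t) ≥ μ(t) for all t ∈ I. -/
open Set Filter Topology

lemma key_alg (d₁ d₂ m m' m'' r r' j11 j12 j21 j21' j22 j22' v1 v2 : ℝ)
    (hm : 0 < m) (hj : j21 ≠ 0) (hv2 : m ≤ v2)
    (hW : (-(d₂*r)*v2 + j21*v1 + j22*v2) * m - v2*m' = 0)
    (hin : j11*j22 - j12*j21 - (d₂*j11 + d₁*j22)*r + d₁*d₂*r^2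
        < -m''/m - (m'/m)*((d₁+d₂)*r - (j11+j22) - j21'/j21)
          - j21 * (((d₂*r' - j22')*j21 - (d₂*r - j22)*j21')/j21^2)) :
    0 < (-(d₂*r')*v2 - (d₂*r)*(-(d₂*r)*v2 + j21*v1 + j22*v2)
        + j21'*v1 + j21*(-(d₁*r)*v1 + j11*v1 + j12*v2)
        + j22'*v2 + j22*(-(d₂*r)*v2 + j21*v1 + j22*v2)) * m - v2*m'' := by
  have hj2 : (0:ℝ) < j21^2 := by positivity
  have hv2pos : 0 < v2 := lt_of_lt_of_le hm hv2
  set L := j11*j22 - j12*j21 - (d₂*j11 + d₁*j22)*r + d₁*d₂*r^2 with hL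
  set P := -m''*j21^2 - m'*((d₁+d₂)*r - (j11+j22))*j21^2 + m'*j21'*j21
      - m*j21*((d₂*r'-j22')*j21 - (d₂*r - j22)*j21') - L*m*j21^2 with hP
  have hPpos : 0 < P := by
    have h1 : 0 < (-m''/m - (m'/m)*((d₁+d₂)*r - (j11+j22) - j21'/j21)
          - j21 * (((d₂*r' - j22')*j21 - (d₂*r - j22)*j21')/j21^2) - L) := sub_pos.2 hin
    have h2 : P = (-m''/m - (m'/m)*((d₁+d₂)*r - (j11+j22) - j21'/j21)
          - j21 * (((d₂*r' - j22')*j21 - (d₂*r - j22)*j21')/j21^2) - L) * (m * j21^2) := by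
      field_simp
      ring
    rw [h2]
    exact mul_pos h1 (by positivity)
  have hv1 : v1*j21*m - v2*m' - (d₂*r - j22)*v2*m = 0 := by linear_combination hW
  have hEq : ((-(d₂*r')*v2 - (d₂*r)*(-(d₂*r)*v2 + j21*v1 + j22*v2)
        + j21'*v1 + j21*(-(d₁*r)*v1 + j11*v1 + j12*v2)
        + j22'*v2 + j22*(-(d₂*r)*v2 + j21*v1 + j22*v2)) * m - v2*m'') * j21^2
      = v2 * P := by
    linear_combination (j21*(j21' + j21*(j11 + j22 - d₁*r - d₂*r))) * hv1
  nlinarith [mul_pos hv2pos hPpos, hEq, hj2]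

/-- Theorem 3, second branch (the J₂₁-branch, inequality (T32)): generalized
Turing instability condition for a two-species reaction-diffusion system on an
evolving domain. Under the differential inequality, the component `V₂` of the
linearized perturbation grows at least as fast as the volume factor `μ`. -/
theorem turing_instability_J21_branch
    (t₀ T : ℝ) (ht : t₀ < T)
    (d₁ d₂ : ℝ) (hd₁ : 0 < d₁) (hd₂ : 0 < d₂)
    (ρ μ J₁₁ J₁₂ J₂₁ J₂₂ V₁ V₂ : ℝ → ℝ)
    (hρd : ∀ t ∈ Icc t₀ T, DifferentiableAt ℝ ρ t)
    (hρc : ContinuousOn (deriv ρ) (Icc t₀ T))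
    (hμ : ContDiff ℝ 2 μ)
    (hμpos : ∀ t ∈ Icc t₀ T, 0 < μ t)
    (hJ₁₁d : ∀ t ∈ Icc t₀ T, DifferentiableAt ℝ J₁₁ t)
    (hJ₁₁c : ContinuousOn (deriv J₁₁) (Icc t₀ T))
    (hJ₁₂d : ∀ t ∈ Icc t₀ T, DifferentiableAt ℝ J₁₂ t)
    (hJ₁₂c : ContinuousOn (deriv J₁₂) (Icc t₀ T))
    (hJ₂₁d : ∀ t ∈ Icc t₀ T, DifferentiableAt ℝ J₂₁ t)
    (hJ₂₁c : ContinuousOn (deriv J₂₁) (Icc t₀ T))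
    (hJ₂₂d : ∀ t ∈ Icc t₀ T, DifferentiableAt ℝ J₂₂ t)
    (hJ₂₂c : ContinuousOn (deriv J₂₂) (Icc t₀ T))
    (hJ₂₁ne : ∀ t ∈ Icc t₀ T, J₂₁ t ≠ 0)
    (hineq : ∀ t ∈ Icc t₀ T,
      J₁₁ t * J₂₂ t - J₁₂ t * J₂₁ t - (d₂ * J₁₁ t + d₁ * J₂₂ t) * ρ t
          + d₁ * d₂ * (ρ t) ^ 2
        < -(deriv (deriv μ) t) / μ t
          - (deriv μ t / μ t)
            * ((d₁ + d₂) * ρ t - (J₁₁ t + J₂₂ t) - deriv J₂₁ t / J₂₁ t)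
          - J₂₁ t * deriv (fun s => (d₂ * ρ s - J₂₂ s) / J₂₁ s) t)
    (hV₁d : ∀ t ∈ Icc t₀ T, DifferentiableAt ℝ V₁ t)
    (hV₂d : ∀ t ∈ Icc t₀ T, DifferentiableAt ℝ V₂ t)
    (hODE₁ : ∀ t ∈ Icc t₀ T,
      deriv V₁ t = -(d₁ * ρ t) * V₁ t + J₁₁ t * V₁ t + J₁₂ t * V₂ t)
    (hODE₂ : ∀ t ∈ Icc t₀ T,
      deriv V₂ t = -(d₂ * ρ t) * V₂ t + J₂₁ t * V₁ t + J₂₂ t * V₂ t)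
    (hic : V₂ t₀ = μ t₀)
    (hic' : -(d₂ * ρ t₀) * μ t₀ + J₂₁ t₀ * V₁ t₀ + J₂₂ t₀ * μ t₀ = deriv μ t₀) :
    ∀ t ∈ Icc t₀ T, μ t ≤ V₂ t := by
  -- regularity of μ
  have hμ2 : ContDiff ℝ (1 + 1 : WithTop ℕ∞) μ := by exact_mod_cast hμ
  have dμ : Differentiable ℝ μ := (contDiff_succ_iff_deriv.mp hμ2).1
  have hμ1 : ContDiff ℝ 1 (deriv μ) := (contDiff_succ_iff_deriv.mp hμ2).2.2
  have dμ' : Differentiable ℝ (deriv μ) := hμ1.differentiable one_ne_zero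
  have cμ : Continuous μ := hμ.continuous
  have cμ' : Continuous (deriv μ) := hμ1.continuous
  have cμ'' : Continuous (deriv (deriv μ)) := hμ1.continuous_deriv le_rfl
  set I := Icc t₀ T with hIdef
  -- continuity of the data
  have cρ : ContinuousOn ρ I := fun t ht => (hρd t ht).continuousAt.continuousWithinAt
  have cJ11 : ContinuousOn J₁₁ I := fun t ht => (hJ₁₁d t ht).continuousAt.continuousWithinAt
  have cJ12 : ContinuousOn J₁₂ I := fun t ht => (hJ₁₂d t ht).continuousAt.continuousWithinAt
  have cJ21 : ContinuousOn J₂₁ I := fun t ht => (hJ₂₁d t ht).continuousAt.continuousWithinAt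
  have cJ22 : ContinuousOn J₂₂ I := fun t ht => (hJ₂₂d t ht).continuousAt.continuousWithinAt
  have cV₁ : ContinuousOn V₁ I := fun t ht => (hV₁d t ht).continuousAt.continuousWithinAt
  have cV₂ : ContinuousOn V₂ I := fun t ht => (hV₂d t ht).continuousAt.continuousWithinAt
  set G : ℝ → ℝ := fun s => -(d₂ * ρ s) * V₂ s + J₂₁ s * V₁ s + J₂₂ s * V₂ s with hGdef
  set W : ℝ → ℝ := fun s => G s * μ s - V₂ s * deriv μ s with hWdef
  set h : ℝ → ℝ := fun s =>
    (-(d₂ * deriv ρ s) * V₂ s - (d₂ * ρ s) * G s + deriv J₂₁ s * V₁ s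
      + J₂₁ s * (-(d₁ * ρ s) * V₁ s + J₁₁ s * V₁ s + J₁₂ s * V₂ s)
      + deriv J₂₂ s * V₂ s + J₂₂ s * G s) * μ s - V₂ s * deriv (deriv μ) s with hhdef
  have cG : ContinuousOn G I :=
    (((continuousOn_const.mul cρ).neg.mul cV₂).add (cJ21.mul cV₁)).add (cJ22.mul cV₂)
  have cW : ContinuousOn W I := (cG.mul cμ.continuousOn).sub (cV₂.mul cμ'.continuousOn)
  have ch : ContinuousOn h I := by
    refine ContinuousOn.sub (ContinuousOn.mul ?_ cμ.continuousOn) (cV₂.mul cμ''.continuousOn)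
    exact ((((((continuousOn_const.mul hρc).neg.mul cV₂).sub
      ((continuousOn_const.mul cρ).mul cG)).add (hJ₂₁c.mul cV₁)).add
      (cJ21.mul (((continuousOn_const.mul cρ).neg.mul cV₁).add
        (cJ11.mul cV₁) |>.add (cJ12.mul cV₂)))).add (hJ₂₂c.mul cV₂)).add (cJ22.mul cG)
  have hWd : ∀ t ∈ I, HasDerivAt W (h t) t := by
    intro t htI
    have Hρ := (hρd t htI).hasDerivAt
    have HJ21 := (hJ₂₁d t htI).hasDerivAt
    have HJ22 := (hJ₂₂d t htI).hasDerivAt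
    have HV1 := (hV₁d t htI).hasDerivAt
    have HV2 := (hV₂d t htI).hasDerivAt
    have Hμ := (dμ t).hasDerivAt
    have Hμ' := (dμ' t).hasDerivAt
    have HG := (((Hρ.const_mul d₂).neg.mul HV2).add (HJ21.mul HV1)).add (HJ22.mul HV2)
    have HW : HasDerivAt W _ t := (HG.mul Hμ).sub (HV2.mul Hμ')
    convert HW using 1
    simp only [hhdef, hGdef, Pi.neg_apply, Pi.mul_apply, Pi.add_apply]
    rw [hODE₁ t htI, hODE₂ t htI]
    ring
  have hud : ∀ t ∈ I, HasDerivAt (fun s => V₂ s / μ s) (W t / μ t ^ 2) t := by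
    intro t htI
    have this : HasDerivAt (fun s => V₂ s / μ s) _ t := HasDerivAt.div (hV₂d t htI).hasDerivAt (dμ t).hasDerivAt (hμpos t htI).ne'
    convert this using 1
    simp only [hWdef, hGdef]
    rw [hODE₂ t htI]
  have hcu : ContinuousOn (fun s => V₂ s / μ s) I :=
    cV₂.div cμ.continuousOn (fun t htI => (hμpos t htI).ne')
  have hhpos : ∀ t ∈ I, μ t ≤ V₂ t → W t = 0 → 0 < h t := by
    intro t htI hv2 hw0
    have Hρ := (hρd t htI).hasDerivAt
    have HJ21 := (hJ₂₁d t htI).hasDerivAt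
    have HJ22 := (hJ₂₂d t htI).hasDerivAt
    have hd : deriv (fun s => (d₂ * ρ s - J₂₂ s) / J₂₁ s) t
        = ((d₂ * deriv ρ t - deriv J₂₂ t) * J₂₁ t - (d₂ * ρ t - J₂₂ t) * deriv J₂₁ t) / J₂₁ t ^ 2 :=
      (((Hρ.const_mul d₂).sub HJ22).div HJ21 (hJ₂₁ne t htI)).deriv
    have hin := hineq t htI
    rw [hd] at hin
    simp only [hWdef, hGdef] at hw0
    simp only [hhdef, hGdef]
    exact key_alg d₁ d₂ (μ t) (deriv μ t) (deriv (deriv μ) t) (ρ t) (deriv ρ t)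
      (J₁₁ t) (J₁₂ t) (J₂₁ t) (deriv J₂₁ t) (J₂₂ t) (deriv J₂₂ t) (V₁ t) (V₂ t)
      (hμpos t htI) (hJ₂₁ne t htI) hv2 hw0 hin
  -- the invariance argument
  have main : ∀ t ∈ I, μ t ≤ V₂ t ∧ 0 ≤ W t := by
    by_contra hcon
    push_neg at hcon
    obtain ⟨t₁, ht₁I, hP⟩ := hcon
    set S := {t | t ∈ I ∧ (V₂ t < μ t ∨ W t < 0)} with hSdef
    have hSne : S.Nonempty := by
      refine ⟨t₁, ht₁I, ?_⟩
      by_cases hc : μ t₁ ≤ V₂ t₁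
      · exact Or.inr (hP hc)
      · exact Or.inl (not_le.1 hc)
    have hbdd : BddBelow S := ⟨t₀, fun s hs => hs.1.1⟩
    set τ := sInf S with hτdef
    obtain ⟨s₀, hs₀⟩ := hSne
    have hτI : τ ∈ I :=
      ⟨le_csInf ⟨s₀, hs₀⟩ fun b hb => hb.1.1, le_trans (csInf_le hbdd hs₀) hs₀.1.2⟩
    have hbefore : ∀ s ∈ I, s < τ → μ s ≤ V₂ s ∧ 0 ≤ W s := by
      intro s hsI hsτ
      have hns : s ∉ S := notMem_of_lt_csInf hsτ hbdd
      constructor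
      · by_contra hx; exact hns ⟨hsI, Or.inl (not_le.1 hx)⟩
      · by_contra hx; exact hns ⟨hsI, Or.inr (not_le.1 hx)⟩
    have hτgood : μ τ ≤ V₂ τ ∧ 0 ≤ W τ := by
      rcases eq_or_lt_of_le hτI.1 with heq | hlt
      · rw [← heq]
        have hW0 : W t₀ = 0 := by
          simp only [hWdef, hGdef, hic]
          rw [hic']
          ring
        rw [hic, hW0]
        exact ⟨le_refl _, le_refl _⟩
      · have hsub : Ico t₀ τ ⊆ I := fun x hx => ⟨hx.1, le_trans hx.2.le hτI.2⟩
        have hne : (𝓝[Ico t₀ τ] τ).NeBot := by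
          rw [← mem_closure_iff_nhdsWithin_neBot, closure_Ico hlt.ne]
          exact ⟨hlt.le, le_refl τ⟩
        constructor
        · have tV : Tendsto (fun s => V₂ s - μ s) (𝓝[Ico t₀ τ] τ) (𝓝 (V₂ τ - μ τ)) :=
            ((cV₂.sub cμ.continuousOn).continuousWithinAt hτI).mono hsub
          have h0 : 0 ≤ V₂ τ - μ τ := ge_of_tendsto tV
            (eventually_nhdsWithin_of_forall fun s hs =>
              sub_nonneg.2 (hbefore s (hsub hs) hs.2).1)
          linarith
        · have tW : Tendsto W (𝓝[Ico t₀ τ] τ) (𝓝 (W τ)) :=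
            (cW.continuousWithinAt hτI).mono hsub
          exact ge_of_tendsto tW
            (eventually_nhdsWithin_of_forall fun s hs => (hbefore s (hsub hs) hs.2).2)
    have hτT : τ < T := by
      rcases lt_or_eq_of_le hτI.2 with hlt | heq
      · exact hlt
      · exfalso
        have h1 : τ ≤ s₀ := csInf_le hbdd hs₀
        have h2 : s₀ = τ := le_antisymm (heq ▸ hs₀.1.2) h1
        rcases hs₀.2 with hx | hx
        · exact absurd (h2 ▸ hτgood.1) (not_le.2 hx)
        · exact absurd (h2 ▸ hτgood.2) (not_le.2 hx)
    have step : ∃ q, τ < q ∧ q ≤ T ∧ ∀ s ∈ Icc τ q, 0 ≤ W s := by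
      rcases eq_or_lt_of_le hτgood.2 with hW0 | hWpos
      · have hpos := hhpos τ hτI hτgood.1 hW0.symm
        have hev : ∀ᶠ s in 𝓝[I] τ, 0 < h s :=
          (ch.continuousWithinAt hτI).eventually (eventually_gt_nhds hpos)
        rw [eventually_nhdsWithin_iff, Metric.eventually_nhds_iff] at hev
        obtain ⟨ε, hε, hball⟩ := hev
        refine ⟨min (τ + ε/2) T, lt_min (by linarith) hτT, min_le_right _ _, ?_⟩
        set q := min (τ + ε/2) T with hqdef
        have hQI : Icc τ q ⊆ I := fun s hs =>
          ⟨le_trans hτI.1 hs.1, le_trans hs.2 (min_le_right _ _)⟩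
        have hQball : ∀ s ∈ Icc τ q, dist s τ < ε := by
          intro s hs
          rw [Real.dist_eq, abs_of_nonneg (by linarith [hs.1])]
          have h1 := le_trans hs.2 (min_le_left (τ + ε/2) T)
          linarith
        have hmono : MonotoneOn W (Icc τ q) := by
          apply monotoneOn_of_deriv_nonneg (convex_Icc _ _) (cW.mono hQI)
          · intro s hs
            rw [interior_Icc] at hs
            exact (hWd s (hQI ⟨hs.1.le, hs.2.le⟩)).differentiableAt.differentiableWithinAt
          · intro s hs
            rw [interior_Icc] at hs
            have hsI := hQI ⟨hs.1.le, hs.2.le⟩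
            rw [(hWd s hsI).deriv]
            exact (hball (hQball s ⟨hs.1.le, hs.2.le⟩) hsI).le
        intro s hs
        calc (0:ℝ) = W τ := hW0
          _ ≤ W s := hmono (left_mem_Icc.2 (le_min (by linarith) hτT.le)) hs hs.1
      · have hev : ∀ᶠ s in 𝓝[I] τ, 0 < W s :=
          (cW.continuousWithinAt hτI).eventually (eventually_gt_nhds hWpos)
        rw [eventually_nhdsWithin_iff, Metric.eventually_nhds_iff] at hev
        obtain ⟨ε, hε, hball⟩ := hev
        refine ⟨min (τ + ε/2) T, lt_min (by linarith) hτT, min_le_right _ _, fun s hs => ?_⟩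
        have hsI : s ∈ I := ⟨le_trans hτI.1 hs.1, le_trans hs.2 (min_le_right _ _)⟩
        have hdist : dist s τ < ε := by
          rw [Real.dist_eq, abs_of_nonneg (by linarith [hs.1])]
          have h1 := le_trans hs.2 (min_le_left (τ + ε/2) T)
          linarith
        exact (hball hdist hsI).le
    obtain ⟨q, hq1, hq2, hq3⟩ := step
    have hQI : Icc τ q ⊆ I := fun s hs => ⟨le_trans hτI.1 hs.1, le_trans hs.2 hq2⟩
    have humono : MonotoneOn (fun s => V₂ s / μ s) (Icc τ q) := by
      apply monotoneOn_of_deriv_nonneg (convex_Icc _ _) (hcu.mono hQI)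
      · intro s hs; rw [interior_Icc] at hs
        exact (hud s (hQI ⟨hs.1.le, hs.2.le⟩)).differentiableAt.differentiableWithinAt
      · intro s hs; rw [interior_Icc] at hs
        have hsI := hQI ⟨hs.1.le, hs.2.le⟩
        rw [(hud s hsI).deriv]
        exact div_nonneg (hq3 s ⟨hs.1.le, hs.2.le⟩) (sq_nonneg _)
    have hgoodQ : ∀ s ∈ Icc τ q, μ s ≤ V₂ s := by
      intro s hs
      have h1 : V₂ τ / μ τ ≤ V₂ s / μ s := humono (left_mem_Icc.2 hq1.le) hs hs.1
      have h2 : (1:ℝ) ≤ V₂ τ / μ τ := (one_le_div (hμpos τ hτI)).2 hτgood.1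
      exact (one_le_div (hμpos s (hQI hs))).1 (le_trans h2 h1)
    obtain ⟨s₁, hs₁S, hs₁lt⟩ := exists_lt_of_csInf_lt ⟨s₀, hs₀⟩ (show sInf S < q from hq1)
    have hs₁τ : τ ≤ s₁ := csInf_le hbdd hs₁S
    have hs₁Q : s₁ ∈ Icc τ q := ⟨hs₁τ, hs₁lt.le⟩
    rcases hs₁S.2 with hx | hx
    · exact absurd (hgoodQ s₁ hs₁Q) (not_le.2 hx)
    · exact absurd (hq3 s₁ hs₁Q) (not_le.2 hx)
  exact fun t htI => (main t htI).1
end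

section
/- Let t₀ < T and I = [t₀, T]. Let P be a real polynomial with P(0) = 0, let d₁, d₂ > 0, let ρ : ℝ → ℝ be continuously differentiable on I, let μ : ℝ → ℝ be twice continuously differentiable with μ(t) > 0 on I, and let J₁₁, J₁₂, J₂₁, J₂₂ : ℝ → ℝ be continuously differentiable on I with J₁₂(t) ≠ 0 on I. Write det J = J₁₁J₂₂ - J₁₂J₂₁ and tr J = J₁₁ + J₂₂. Suppose that for all t ∈ I: det J(t) + (d₂J₁₁(t) + d₁J₂₂(t))·P(-ρ(t)) + d₁d₂·P(-ρ(t))² < -μ''(t)/μ(t) + (μ'(t)/μ(t))·[(d₁+d₂)·P(-ρ(t)) + tr J(t) + J₁₂'(t)/J₁₂(t)] + J₁₂(t)·(d/dt)((d₁·P(-ρ(t)) + J₁₁(t))/J₁₂(t)). Then any differentiable pair V₁, V₂ : ℝ → ℝ satisfying V₁' = d₁·P(-ρ(t))·V₁ + J₁₁(t)V₁ + J₁₂(t)V₂ and V₂' = d₂·P(-ρ(t))·V₂ + J₂₁(t)V₁ + J₂₂(t)V₂ on I, with V₁(t₀) = μ(t₀) and d₁·P(-ρ(t₀))·μ(t₀)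 + J₁₁(t₀)μ(t₀) + J₁₂(t₀)V₂(t₀) = μ'(t₀), satisfies V₁(t) ≥ μ(t) for all t ∈ I. -/
open Set

set_option maxHeartbeats 1600000 in
/-- Theorem 4, first branch: instability condition for two-species
pattern-forming systems with higher-order spatial operator `D·P(∇²)` (with `P`
a polynomial, `P(0) = 0`) on an evolving domain; the component `V₁` of the
linearized perturbation grows at least as fast as the volume factor `μ`. -/
theorem higher_order_instability_J12_branch
    (t₀ T : ℝ) (ht : t₀ < T)
    (P : Polynomial ℝ) (hP : P.eval 0 = 0)
    (d₁ d₂ : ℝ) (hd₁ : 0 < d₁) (hd₂ : 0 < d₂)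
    (ρ μ J₁₁ J₁₂ J₂₁ J₂₂ V₁ V₂ : ℝ → ℝ)
    (hρd : ∀ t ∈ Icc t₀ T, DifferentiableAt ℝ ρ t)
    (hρc : ContinuousOn (deriv ρ) (Icc t₀ T))
    (hμ : ContDiff ℝ 2 μ)
    (hμpos : ∀ t ∈ Icc t₀ T, 0 < μ t)
    (hJ₁₁d : ∀ t ∈ Icc t₀ T, DifferentiableAt ℝ J₁₁ t)
    (hJ₁₁c : ContinuousOn (deriv J₁₁) (Icc t₀ T))
    (hJ₁₂d : ∀ t ∈ Icc t₀ T, DifferentiableAt ℝ J₁₂ t)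
    (hJ₁₂c : ContinuousOn (deriv J₁₂) (Icc t₀ T))
    (hJ₂₁d : ∀ t ∈ Icc t₀ T, DifferentiableAt ℝ J₂₁ t)
    (hJ₂₁c : ContinuousOn (deriv J₂₁) (Icc t₀ T))
    (hJ₂₂d : ∀ t ∈ Icc t₀ T, DifferentiableAt ℝ J₂₂ t)
    (hJ₂₂c : ContinuousOn (deriv J₂₂) (Icc t₀ T))
    (hJ₁₂ne : ∀ t ∈ Icc t₀ T, J₁₂ t ≠ 0)
    (hineq : ∀ t ∈ Icc t₀ T,
      J₁₁ t * J₂₂ t - J₁₂ t * J₂₁ t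
          + (d₂ * J₁₁ t + d₁ * J₂₂ t) * P.eval (-ρ t)
          + d₁ * d₂ * (P.eval (-ρ t)) ^ 2
        < -(deriv (deriv μ) t) / μ t
          + (deriv μ t / μ t)
            * ((d₁ + d₂) * P.eval (-ρ t) + (J₁₁ t + J₂₂ t) + deriv J₁₂ t / J₁₂ t)
          + J₁₂ t * deriv (fun s => (d₁ * P.eval (-ρ s) + J₁₁ s) / J₁₂ s) t)
    (hV₁d : ∀ t ∈ Icc t₀ T, DifferentiableAt ℝ V₁ t)
    (hV₂d : ∀ t ∈ Icc t₀ T, DifferentiableAt ℝ V₂ t)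
    (hODE₁ : ∀ t ∈ Icc t₀ T,
      deriv V₁ t = d₁ * P.eval (-ρ t) * V₁ t + J₁₁ t * V₁ t + J₁₂ t * V₂ t)
    (hODE₂ : ∀ t ∈ Icc t₀ T,
      deriv V₂ t = d₂ * P.eval (-ρ t) * V₂ t + J₂₁ t * V₁ t + J₂₂ t * V₂ t)
    (hic : V₁ t₀ = μ t₀)
    (hic' : d₁ * P.eval (-ρ t₀) * μ t₀ + J₁₁ t₀ * μ t₀ + J₁₂ t₀ * V₂ t₀ = deriv μ t₀) :
    ∀ t ∈ Icc t₀ T, μ t ≤ V₁ t := by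
  -- basic facts about μ
  have hμdiff : Differentiable ℝ μ := hμ.differentiable (by norm_num)
  have hμ'diff : Differentiable ℝ (deriv μ) := by
    have h2 : ContDiff ℝ ((1:ℕ∞)+1) μ := by exact_mod_cast hμ
    exact ((contDiff_succ_iff_deriv.mp h2).2.2).differentiable (by norm_num)
  -- the (scaled) Wronskian
  set w : ℝ → ℝ := fun s =>
    ((d₁ * Polynomial.eval (-ρ s) P + J₁₁ s) * V₁ s + J₁₂ s * V₂ s) * μ s
      - V₁ s * deriv μ s with hw_def
  -- its derivative value
  set 𝓦 : ℝ → ℝ := fun s =>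
    (((d₁ * (Polynomial.eval (-ρ s) (Polynomial.derivative P) * -(deriv ρ s)) + deriv J₁₁ s) * V₁ s
        + (d₁ * Polynomial.eval (-ρ s) P + J₁₁ s) * deriv V₁ s
        + (deriv J₁₂ s * V₂ s + J₁₂ s * deriv V₂ s)) * μ s
      + ((d₁ * Polynomial.eval (-ρ s) P + J₁₁ s) * V₁ s + J₁₂ s * V₂ s) * deriv μ s)
      - (deriv V₁ s * deriv μ s + V₁ s * deriv (deriv μ) s) with hW_def
  -- pointwise derivative facts
  have hQd : ∀ t ∈ Icc t₀ T, HasDerivAt (fun s => Polynomial.eval (-ρ s) P)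
      (Polynomial.eval (-ρ t) (Polynomial.derivative P) * -(deriv ρ t)) t := by
    intro t htI
    exact (P.hasDerivAt (-ρ t)).comp t ((hρd t htI).hasDerivAt.neg)
  have had : ∀ t ∈ Icc t₀ T, HasDerivAt (fun s => d₁ * Polynomial.eval (-ρ s) P + J₁₁ s)
      (d₁ * (Polynomial.eval (-ρ t) (Polynomial.derivative P) * -(deriv ρ t)) + deriv J₁₁ t) t := by
    intro t htI
    exact ((hQd t htI).const_mul d₁).add (hJ₁₁d t htI).hasDerivAt
  have hwderiv : ∀ t ∈ Icc t₀ T, HasDerivAt w (𝓦 t) t := by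
    intro t htI
    have h2 : HasDerivAt (fun s => (d₁ * Polynomial.eval (-ρ s) P + J₁₁ s) * V₁ s + J₁₂ s * V₂ s)
        ((d₁ * (Polynomial.eval (-ρ t) (Polynomial.derivative P) * -(deriv ρ t)) + deriv J₁₁ t) * V₁ t
          + (d₁ * Polynomial.eval (-ρ t) P + J₁₁ t) * deriv V₁ t
          + (deriv J₁₂ t * V₂ t + J₁₂ t * deriv V₂ t)) t :=
      ((had t htI).mul (hV₁d t htI).hasDerivAt).add
        ((hJ₁₂d t htI).hasDerivAt.mul (hV₂d t htI).hasDerivAt)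
    have h3 := (h2.mul (hμdiff t).hasDerivAt).sub
      ((hV₁d t htI).hasDerivAt.mul (hμ'diff t).hasDerivAt)
    exact h3
  -- w vanishes at t₀
  have hw0 : w t₀ = 0 := by
    show ((d₁ * Polynomial.eval (-ρ t₀) P + J₁₁ t₀) * V₁ t₀ + J₁₂ t₀ * V₂ t₀) * μ t₀
        - V₁ t₀ * deriv μ t₀ = 0
    rw [hic, ← hic']
    ring
  -- the key differential inequality
  have hkey : ∀ t ∈ Icc t₀ T, 0 < V₁ t →
      (d₁ * Polynomial.eval (-ρ t) P + J₁₁ t + (d₂ * Polynomial.eval (-ρ t) P + J₂₂ t)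
        + deriv J₁₂ t / J₁₂ t) * w t < 𝓦 t := by
    intro t htI hv
    have hb : J₁₂ t ≠ 0 := hJ₁₂ne t htI
    have hm : 0 < μ t := hμpos t htI
    have hi := hineq t htI
    have hdq : deriv (fun s => (d₁ * Polynomial.eval (-ρ s) P + J₁₁ s) / J₁₂ s) t
        = ((d₁ * (Polynomial.eval (-ρ t) (Polynomial.derivative P) * -(deriv ρ t)) + deriv J₁₁ t)
            * J₁₂ t - (d₁ * Polynomial.eval (-ρ t) P + J₁₁ t) * deriv J₁₂ t) / J₁₂ t ^ 2 :=
      ((had t htI).div (hJ₁₂d t htI).hasDerivAt hb).deriv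
    rw [hdq] at hi
    simp only [hw_def, hW_def]
    rw [hODE₁ t htI, hODE₂ t htI]
    set q := Polynomial.eval (-ρ t) P with hq
    set q' := Polynomial.eval (-ρ t) (Polynomial.derivative P) * -(deriv ρ t) with hq'
    set m := μ t; set m' := deriv μ t; set m'' := deriv (deriv μ) t
    set b := J₁₂ t; set b' := deriv J₁₂ t
    set a11 := J₁₁ t; set a11' := deriv J₁₁ t; set a21 := J₂₁ t; set a22 := J₂₂ t
    set v1 := V₁ t; set v2 := V₂ t
    have h2 : m * (a11 * a22 - b * a21 + (d₂ * a11 + d₁ * a22) * q + d₁ * d₂ * q ^ 2)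
        < m * (-m'' / m + m' / m * ((d₁ + d₂) * q + (a11 + a22) + b' / b)
            + b * (((d₁ * q' + a11') * b - (d₁ * q + a11) * b') / b ^ 2)) :=
      mul_lt_mul_of_pos_left hi hm
    have hident :
        ((((d₁ * q' + a11') * v1
            + (d₁ * q + a11) * (d₁ * q * v1 + a11 * v1 + b * v2)
            + (b' * v2 + b * (d₂ * q * v2 + a21 * v1 + a22 * v2))) * m
          + ((d₁ * q + a11) * v1 + b * v2) * m')
          - ((d₁ * q * v1 + a11 * v1 + b * v2) * m' + v1 * m''))
        - (d₁ * q + a11 + (d₂ * q + a22) + b' / b)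
            * (((d₁ * q + a11) * v1 + b * v2) * m - v1 * m')
        = v1 * (m * (-m'' / m + m' / m * ((d₁ + d₂) * q + (a11 + a22) + b' / b)
              + b * (((d₁ * q' + a11') * b - (d₁ * q + a11) * b') / b ^ 2))
            - m * (a11 * a22 - b * a21 + (d₂ * a11 + d₁ * a22) * q + d₁ * d₂ * q ^ 2)) := by
      field_simp
      ring
    nlinarith [mul_pos hv (sub_pos.mpr h2), hident]
  -- monotonicity: nonnegative w forces V₁ ≥ μ
  have hmono : ∀ τ ∈ Icc t₀ T, (∀ s ∈ Icc t₀ τ, 0 ≤ w s) → ∀ s ∈ Icc t₀ τ, μ s ≤ V₁ s := by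
    intro τ hτ hwpos s hs
    have hsub : Icc t₀ τ ⊆ Icc t₀ T := Icc_subset_Icc_right hτ.2
    have hμne : ∀ x ∈ Icc t₀ τ, μ x ≠ 0 := fun x hx => (hμpos x (hsub hx)).ne'
    have hcont : ContinuousOn (fun x => V₁ x / μ x) (Icc t₀ τ) := by
      apply ContinuousOn.div
      · exact fun x hx => (hV₁d x (hsub hx)).continuousAt.continuousWithinAt
      · exact hμdiff.continuous.continuousOn
      · exact hμne
    have hder : ∀ x ∈ interior (Icc t₀ τ),
        HasDerivAt (fun x => V₁ x / μ x)
          ((deriv V₁ x * μ x - V₁ x * deriv μ x) / μ x ^ 2) x := by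
      intro x hx
      rw [interior_Icc] at hx
      have hxI : x ∈ Icc t₀ T := hsub ⟨hx.1.le, hx.2.le⟩
      exact (hV₁d x hxI).hasDerivAt.div (hμdiff x).hasDerivAt (hμpos x hxI).ne'
    have hmon : MonotoneOn (fun x => V₁ x / μ x) (Icc t₀ τ) := by
      apply monotoneOn_of_deriv_nonneg (convex_Icc _ _) hcont
      · intro x hx
        exact (hder x hx).differentiableAt.differentiableWithinAt
      · intro x hx
        rw [(hder x hx).deriv]
        have hx' : x ∈ Icc t₀ τ := by
          rw [interior_Icc] at hx; exact ⟨hx.1.le, hx.2.le⟩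
        have hxI : x ∈ Icc t₀ T := hsub hx'
        have hnum : deriv V₁ x * μ x - V₁ x * deriv μ x = w x := by
          rw [hODE₁ x hxI]; simp only [hw_def]; ring
        rw [hnum]
        exact div_nonneg (hwpos x hx') (sq_nonneg _)
    have h1 : V₁ t₀ / μ t₀ ≤ V₁ s / μ s :=
      hmon ⟨le_refl t₀, hs.1.trans hs.2⟩ hs hs.1
    rw [hic, div_self (hμpos t₀ ⟨le_refl _, ht.le⟩).ne'] at h1
    have hms : 0 < μ s := hμpos s (hsub hs)
    exact (one_le_div hms).mp h1
  -- main claim: w is nonnegative on the whole interval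
  have hwnn : ∀ t ∈ Icc t₀ T, 0 ≤ w t := by
    by_contra hcon
    push_neg at hcon
    obtain ⟨t₁, ht₁, hwneg⟩ := hcon
    set bad : Set ℝ := {t | t ∈ Icc t₀ T ∧ w t < 0} with hbad_def
    have hbadne : bad.Nonempty := ⟨t₁, ht₁, hwneg⟩
    have hbadbdd : BddBelow bad := ⟨t₀, fun x hx => hx.1.1⟩
    set τ := sInf bad with hτ_def
    have hτcl : τ ∈ closure bad := csInf_mem_closure hbadne hbadbdd
    have hτI : τ ∈ Icc t₀ T :=
      (closure_minimal (fun x hx => hx.1) isClosed_Icc) hτcl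
    have hwcont : ContinuousAt w τ := (hwderiv τ hτI).differentiableAt.continuousAt
    haveI hne : (nhdsWithin τ bad).NeBot := mem_closure_iff_nhdsWithin_neBot.mp hτcl
    have hwτle : w τ ≤ 0 :=
      le_of_tendsto (hwcont.continuousWithinAt.tendsto)
        (eventually_nhdsWithin_of_forall fun x (hx : x ∈ bad) => hx.2.le)
    have hnotbad : ∀ x, x ∈ Icc t₀ T → x < τ → 0 ≤ w x := by
      intro x hxI hxτ
      by_contra hneg
      push_neg at hneg
      exact absurd (csInf_le hbadbdd ⟨hxI, hneg⟩) (not_le.mpr hxτ)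
    have hwτge : 0 ≤ w τ := by
      rcases eq_or_lt_of_le hτI.1 with heq | hlt
      · rw [← heq, hw0]
      · have hclIco : τ ∈ closure (Ico t₀ τ) := by
          rw [closure_Ico hlt.ne]; exact ⟨hlt.le, le_refl τ⟩
        haveI hne2 : (nhdsWithin τ (Ico t₀ τ)).NeBot :=
          mem_closure_iff_nhdsWithin_neBot.mp hclIco
        refine ge_of_tendsto
          ((hwcont.continuousWithinAt : ContinuousWithinAt w (Ico t₀ τ) τ).tendsto)
          (eventually_nhdsWithin_of_forall fun x (hx : x ∈ Ico t₀ τ) => ?_)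
        exact hnotbad x ⟨hx.1, hx.2.le.trans hτI.2⟩ hx.2
    have hwτ : w τ = 0 := le_antisymm hwτle hwτge
    have hwlow : ∀ s ∈ Icc t₀ τ, 0 ≤ w s := by
      intro s hs
      rcases eq_or_lt_of_le hs.2 with heq | hlt
      · rw [heq, hwτ]
      · exact hnotbad s ⟨hs.1, hs.2.trans hτI.2⟩ hlt
    have hVτ : 0 < V₁ τ :=
      lt_of_lt_of_le (hμpos τ hτI) (hmono τ hτI hwlow τ ⟨hτI.1, le_refl τ⟩)
    have hWpos : 0 < 𝓦 τ := by
      have hk := hkey τ hτI hVτ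
      rw [hwτ, mul_zero] at hk
      exact hk
    -- w is eventually positive strictly to the right of τ
    have hslope : Filter.Tendsto (slope w τ) (nhdsWithin τ {τ}ᶜ) (nhds (𝓦 τ)) :=
      hasDerivAt_iff_tendsto_slope.mp (hwderiv τ hτI)
    have hev : ∀ᶠ x in nhdsWithin τ (Ioi τ), 0 < w x := by
      have h1 : ∀ᶠ x in nhdsWithin τ {τ}ᶜ, 0 < slope w τ x :=
        hslope.eventually (lt_mem_nhds hWpos)
      have h2 : ∀ᶠ x in nhdsWithin τ (Ioi τ), 0 < slope w τ x :=
        (h1.filter_mono (nhdsWithin_mono τ fun x hx => ne_of_gt hx))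
      refine h2.mp (eventually_nhdsWithin_of_forall fun x hx hsl => ?_)
      have hx' : (0:ℝ) < x - τ := sub_pos.mpr hx
      have : slope w τ x = (w x - w τ) / (x - τ) := by
        rw [slope_def_field]
      rw [this, hwτ, sub_zero] at hsl
      have := mul_pos hsl hx'
      rwa [div_mul_cancel₀ _ hx'.ne'] at this
    have hbadIoi : bad ⊆ Ioi τ := by
      intro x hx
      rcases eq_or_lt_of_le (csInf_le hbadbdd hx) with heq | hlt
      · exfalso; rw [← heq] at hx; exact absurd hwτ (ne_of_lt hx.2)
      · exact hlt
    have hevbad : ∀ᶠ x in nhdsWithin τ bad, 0 < w x :=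
      hev.filter_mono (nhdsWithin_mono τ hbadIoi)
    have hevbad2 : ∀ᶠ x in nhdsWithin τ bad, w x < 0 :=
      eventually_nhdsWithin_of_forall fun x (hx : x ∈ bad) => hx.2
    obtain ⟨x, hx1, hx2⟩ := (hevbad.and hevbad2).exists
    exact absurd hx1 (not_lt.mpr hx2.le)
  exact fun t htI => hmono T ⟨ht.le, le_refl T⟩ (fun s hs => hwnn s hs) t htI
end

section
/- Let t₀ < T and I = [t₀, T]. Let d₁, d₂ > 0, let k be a positive integer, let r : ℝ → ℝ be twice continuously differentiable with r(t) > 0 on I, and let J₁₁, J₁₂, J₂₁, J₂₂ : ℝ → ℝ be continuously differentiable on I with J₁₂(t) ≠ 0 on I. Write det J = J₁₁J₂₂ - J₁₂J₂₁, tr J = J₁₁ + J₂₂, and ρ(t) = π²k²/r(t)². Suppose that for all t ∈ I: det J(t) - (d₂J₁₁(t) + d₁J₂₂(t))·π²k²/r(t)² + d₁d₂·π⁴k⁴/r(t)⁴ < -r''(t)/r(t) - (r'(t)/r(t))·[(d₁+d₂)·π²k²/r(t)² - tr J(t) - J₁₂'(t)/J₁₂(t)] - J₁₂(t)·(d/dt)((d₁π²k²/r(t)²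 - J₁₁(t))/J₁₂(t)). Then any differentiable pair V₁, V₂ : ℝ → ℝ satisfying V₁' = -d₁ρ(t)V₁ + J₁₁(t)V₁ + J₁₂(t)V₂ and V₂' = -d₂ρ(t)V₂ + J₂₁(t)V₁ + J₂₂(t)V₂ on I, with V₁(t₀) = r(t₀) and -d₁ρ(t₀)r(t₀) + J₁₁(t₀)r(t₀) + J₁₂(t₀)V₂(t₀) = r'(t₀), satisfies V₁(t) ≥ r(t) for all t ∈ I. -/
open Set Real

set_option maxHeartbeats 2000000

/-- Instantiation of Theorem 3 (first branch) on an isotropically evolving line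
segment `Ω(t) = [0, r(t)]`: with eigenvalues `ρ_k(t) = π²k²/r(t)²` and volume
factor `μ(t) = r(t)`, the differential inequality forces the component `V₁` of
the linearized perturbation of the k-th mode to grow at least as fast
as `r(t)`. -/
theorem turing_instability_evolving_interval
    (t₀ T : ℝ) (ht : t₀ < T)
    (d₁ d₂ : ℝ) (hd₁ : 0 < d₁) (hd₂ : 0 < d₂)
    (k : ℕ) (hk : 1 ≤ k)
    (r J₁₁ J₁₂ J₂₁ J₂₂ V₁ V₂ : ℝ → ℝ)
    (hr : ContDiff ℝ 2 r)
    (hrpos : ∀ t ∈ Icc t₀ T, 0 < r t)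
    (hJ₁₁d : ∀ t ∈ Icc t₀ T, DifferentiableAt ℝ J₁₁ t)
    (hJ₁₁c : ContinuousOn (deriv J₁₁) (Icc t₀ T))
    (hJ₁₂d : ∀ t ∈ Icc t₀ T, DifferentiableAt ℝ J₁₂ t)
    (hJ₁₂c : ContinuousOn (deriv J₁₂) (Icc t₀ T))
    (hJ₂₁d : ∀ t ∈ Icc t₀ T, DifferentiableAt ℝ J₂₁ t)
    (hJ₂₁c : ContinuousOn (deriv J₂₁) (Icc t₀ T))
    (hJ₂₂d : ∀ t ∈ Icc t₀ T, DifferentiableAt ℝ J₂₂ t)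
    (hJ₂₂c : ContinuousOn (deriv J₂₂) (Icc t₀ T))
    (hJ₁₂ne : ∀ t ∈ Icc t₀ T, J₁₂ t ≠ 0)
    (hineq : ∀ t ∈ Icc t₀ T,
      J₁₁ t * J₂₂ t - J₁₂ t * J₂₁ t
          - (d₂ * J₁₁ t + d₁ * J₂₂ t) * (π ^ 2 * (k : ℝ) ^ 2 / (r t) ^ 2)
          + d₁ * d₂ * (π ^ 4 * (k : ℝ) ^ 4 / (r t) ^ 4)
        < -(deriv (deriv r) t) / r t
          - (deriv r t / r t)
            * ((d₁ + d₂) * (π ^ 2 * (k : ℝ) ^ 2 / (r t) ^ 2)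
                - (J₁₁ t + J₂₂ t) - deriv J₁₂ t / J₁₂ t)
          - J₁₂ t * deriv
              (fun s => (d₁ * π ^ 2 * (k : ℝ) ^ 2 / (r s) ^ 2 - J₁₁ s) / J₁₂ s) t)
    (hV₁d : ∀ t ∈ Icc t₀ T, DifferentiableAt ℝ V₁ t)
    (hV₂d : ∀ t ∈ Icc t₀ T, DifferentiableAt ℝ V₂ t)
    (hODE₁ : ∀ t ∈ Icc t₀ T,
      deriv V₁ t = -(d₁ * (π ^ 2 * (k : ℝ) ^ 2 / (r t) ^ 2)) * V₁ t
        + J₁₁ t * V₁ t + J₁₂ t * V₂ t)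
    (hODE₂ : ∀ t ∈ Icc t₀ T,
      deriv V₂ t = -(d₂ * (π ^ 2 * (k : ℝ) ^ 2 / (r t) ^ 2)) * V₂ t
        + J₂₁ t * V₁ t + J₂₂ t * V₂ t)
    (hic : V₁ t₀ = r t₀)
    (hic' : -(d₁ * (π ^ 2 * (k : ℝ) ^ 2 / (r t₀) ^ 2)) * r t₀
        + J₁₁ t₀ * r t₀ + J₁₂ t₀ * V₂ t₀ = deriv r t₀) :
    ∀ t ∈ Icc t₀ T, r t ≤ V₁ t := by
  -- `r` is differentiable and so is `deriv r`
  have hrd : Differentiable ℝ r := hr.differentiable (by norm_num)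
  have hrd2 : Differentiable ℝ (deriv r) := by
    have h2 : ContDiff ℝ ((1 : ℕ) + 1) r := by exact_mod_cast hr
    have := (contDiff_succ_iff_deriv.mp h2).2.2
    exact this.differentiable (by norm_num)
  set P : ℝ → ℝ := fun s => (d₁ * π ^ 2 * (k : ℝ) ^ 2 / (r s) ^ 2 - J₁₁ s) / J₁₂ s
    with hP
  set G : ℝ → ℝ := fun s =>
      J₁₂ s * V₂ s - (J₁₂ s * P s + deriv r s / r s) * V₁ s with hG
  set L : ℝ → ℝ := fun s =>
      deriv J₁₂ s / J₁₂ s + (J₁₁ s + J₂₂ s)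
        - (d₁ + d₂) * (π ^ 2 * (k : ℝ) ^ 2 / (r s) ^ 2) - deriv r s / r s with hL
  set E : ℝ → ℝ := fun s =>
      (-(deriv (deriv r) s) / r s
          - (deriv r s / r s)
            * ((d₁ + d₂) * (π ^ 2 * (k : ℝ) ^ 2 / (r s) ^ 2)
                - (J₁₁ s + J₂₂ s) - deriv J₁₂ s / J₁₂ s)
          - J₁₂ s * deriv P s)
        - (J₁₁ s * J₂₂ s - J₁₂ s * J₂₁ s
          - (d₂ * J₁₁ s + d₁ * J₂₂ s) * (π ^ 2 * (k : ℝ) ^ 2 / (r s) ^ 2)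
          + d₁ * d₂ * (π ^ 4 * (k : ℝ) ^ 4 / (r s) ^ 4)) with hE
  have hEpos : ∀ t ∈ Icc t₀ T, 0 < E t := by
    intro t ht'
    simpa only [hE] using sub_pos.mpr (hineq t ht')
  -- the key derivative identity for `G`
  have hGd : ∀ t ∈ Icc t₀ T, HasDerivAt G (L t * G t + E t * V₁ t) t := by
    intro t ht'
    have hrne : r t ≠ 0 := (hrpos t ht').ne'
    have hJne : J₁₂ t ≠ 0 := hJ₁₂ne t ht'
    have hPd : DifferentiableAt ℝ P t := by
      rw [hP]
      exact (((differentiableAt_const _).div ((hrd t).pow 2)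
        (pow_ne_zero 2 hrne)).sub (hJ₁₁d t ht')).div (hJ₁₂d t ht') hJne
    have h1 : HasDerivAt J₁₂ (deriv J₁₂ t) t := (hJ₁₂d t ht').hasDerivAt
    have h2 : HasDerivAt V₂ (deriv V₂ t) t := (hV₂d t ht').hasDerivAt
    have h3 : HasDerivAt P (deriv P t) t := hPd.hasDerivAt
    have h4 : HasDerivAt (deriv r) (deriv (deriv r) t) t := (hrd2 t).hasDerivAt
    have h5 : HasDerivAt r (deriv r t) t := (hrd t).hasDerivAt
    have h6 : HasDerivAt V₁ (deriv V₁ t) t := (hV₁d t ht').hasDerivAt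
    have hD : HasDerivAt G
        (deriv J₁₂ t * V₂ t + J₁₂ t * deriv V₂ t
          - ((deriv J₁₂ t * P t + J₁₂ t * deriv P t
                + (deriv (deriv r) t * r t - deriv r t * deriv r t) / r t ^ 2) * V₁ t
             + (J₁₂ t * P t + deriv r t / r t) * deriv V₁ t)) t := by
      rw [hG]
      exact (h1.mul h2).sub (((h1.mul h3).add (h4.div h5 hrne)).mul h6)
    convert hD using 1
    rw [hODE₁ t ht', hODE₂ t ht']
    simp only [hL, hE, hG, hP]
    field_simp
    ring
  have hGcont : ∀ t ∈ Icc t₀ T, ContinuousAt G t := fun t ht' => (hGd t ht').continuousAt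
  -- initial value of G
  have hG0 : G t₀ = 0 := by
    have h0 : t₀ ∈ Icc t₀ T := left_mem_Icc.mpr ht.le
    have hrne : r t₀ ≠ 0 := (hrpos t₀ h0).ne'
    have hJne : J₁₂ t₀ ≠ 0 := hJ₁₂ne t₀ h0
    simp only [hG, hP]
    rw [hic, ← hic']
    field_simp
    ring
  -- deriv V₁ in terms of G
  have hderivV₁ : ∀ u ∈ Icc t₀ T, deriv V₁ u = G u + deriv r u / r u * V₁ u := by
    intro u hu
    have hrne : r u ≠ 0 := (hrpos u hu).ne'
    have hJne : J₁₂ u ≠ 0 := hJ₁₂ne u hu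
    rw [hODE₁ u hu]
    simp only [hG, hP]
    field_simp
    ring
  -- monotonicity of V₁ / r wherever G is nonneg
  have hmono : ∀ x ∈ Icc t₀ T, (∀ u ∈ Icc t₀ x, 0 ≤ G u) →
      ∀ u ∈ Icc t₀ x, r u ≤ V₁ u := by
    intro x hx hGnn
    have hsub : Icc t₀ x ⊆ Icc t₀ T := Icc_subset_Icc le_rfl hx.2
    have hWmono : MonotoneOn (fun s => V₁ s / r s) (Icc t₀ x) := by
      apply monotoneOn_of_deriv_nonneg (convex_Icc _ _)
      · intro u hu
        exact ((hV₁d u (hsub hu)).continuousAt.div (hrd u).continuousAt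
          ((hrpos u (hsub hu)).ne')).continuousWithinAt
      · rw [interior_Icc]
        intro u hu
        have hu' : u ∈ Icc t₀ T := hsub (Ioo_subset_Icc_self hu)
        exact ((hV₁d u hu').div (hrd u) (hrpos u hu').ne').differentiableWithinAt
      · rw [interior_Icc]
        intro u hu
        have hu' : u ∈ Icc t₀ T := hsub (Ioo_subset_Icc_self hu)
        have hrne : r u ≠ 0 := (hrpos u hu').ne'
        have hd : deriv (fun s => V₁ s / r s) u
            = (deriv V₁ u * r u - V₁ u * deriv r u) / r u ^ 2 :=
          ((hV₁d u hu').hasDerivAt.div (hrd u).hasDerivAt hrne).deriv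
        rw [hd, hderivV₁ u hu']
        have heq : ((G u + deriv r u / r u * V₁ u) * r u - V₁ u * deriv r u)
            = G u * r u := by field_simp; ring
        rw [heq]
        exact div_nonneg (mul_nonneg (hGnn u ⟨hu.1.le, hu.2.le⟩) (hrpos u hu').le)
          (sq_nonneg _)
    intro u hu
    have h0 : t₀ ∈ Icc t₀ x := left_mem_Icc.mpr hx.1
    have h1 : V₁ t₀ / r t₀ ≤ V₁ u / r u := hWmono h0 hu hu.1
    have h2 : V₁ t₀ / r t₀ = 1 := by
      rw [hic, div_self (hrpos t₀ (left_mem_Icc.mpr ht.le)).ne']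
    rw [h2] at h1
    exact (one_le_div (hrpos u (hsub hu))).mp h1
  -- the invariance set
  set A : Set ℝ := {x | x ∈ Icc t₀ T ∧ ∀ u ∈ Icc t₀ x, 0 ≤ G u} with hA
  have hAt₀ : t₀ ∈ A := by
    refine ⟨left_mem_Icc.mpr ht.le, fun u hu => ?_⟩
    have : u = t₀ := le_antisymm hu.2 hu.1
    rw [this, hG0]
  have hAne : A.Nonempty := ⟨t₀, hAt₀⟩
  have hAbdd : BddAbove A := ⟨T, fun x hx => hx.1.2⟩
  set τ : ℝ := sSup A with hτ
  have hτ₁ : t₀ ≤ τ := le_csSup hAbdd hAt₀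
  have hτ₂ : τ ≤ T := csSup_le hAne fun x hx => hx.1.2
  have hτIcc : τ ∈ Icc t₀ T := ⟨hτ₁, hτ₂⟩
  have hbelow : ∀ u ∈ Ico t₀ τ, 0 ≤ G u := by
    intro u hu
    obtain ⟨x, hxA, hux⟩ := exists_lt_of_lt_csSup hAne hu.2
    exact hxA.2 u ⟨hu.1, hux.le⟩
  have hGτ : 0 ≤ G τ := by
    rcases eq_or_lt_of_le hτ₁ with heq | hlt
    · rw [← heq, hG0]
    · have hc : Filter.Tendsto G (nhdsWithin τ (Iio τ)) (nhds (G τ)) :=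
        (hGcont τ hτIcc).continuousWithinAt
      refine ge_of_tendsto hc ?_
      filter_upwards [Ico_mem_nhdsLT_of_mem (⟨hlt, le_rfl⟩ : τ ∈ Ioc t₀ τ)] with u hu
      exact hbelow u hu
  have hτA : τ ∈ A := by
    refine ⟨hτIcc, fun u hu => ?_⟩
    rcases lt_or_eq_of_le hu.2 with h | h
    · exact hbelow u ⟨hu.1, h⟩
    · rw [h]; exact hGτ
  have hτT : τ = T := by
    by_contra hne
    have hltT : τ < T := lt_of_le_of_ne hτ₂ hne
    have hVτ : ∀ u ∈ Icc t₀ τ, r u ≤ V₁ u := hmono τ hτIcc hτA.2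
    have hev : ∀ᶠ u in nhdsWithin τ (Ioi τ), 0 ≤ G u := by
      rcases lt_or_eq_of_le hGτ with hpos | hzero
      · have h1 : ∀ᶠ u in nhds τ, 0 < G u :=
          (hGcont τ hτIcc).eventually (eventually_gt_nhds hpos)
        exact (h1.filter_mono nhdsWithin_le_nhds).mono fun u hu => hu.le
      · have hD : HasDerivAt G (L τ * G τ + E τ * V₁ τ) τ := hGd τ hτIcc
        have hV₁τ : 0 < V₁ τ :=
          lt_of_lt_of_le (hrpos τ hτIcc) (hVτ τ ⟨hτ₁, le_rfl⟩)
        have hDpos : 0 < L τ * G τ + E τ * V₁ τ := by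
          rw [← hzero, mul_zero, zero_add]
          exact mul_pos (hEpos τ hτIcc) hV₁τ
        have hslope : Filter.Tendsto (slope G τ) (nhdsWithin τ {τ}ᶜ)
            (nhds (L τ * G τ + E τ * V₁ τ)) := hasDerivAt_iff_tendsto_slope.mp hD
        have h2 : Filter.Tendsto (slope G τ) (nhdsWithin τ (Ioi τ))
            (nhds (L τ * G τ + E τ * V₁ τ)) :=
          hslope.mono_left (nhdsWithin_mono τ fun u hu => ne_of_gt hu)
        have h3 : ∀ᶠ u in nhdsWithin τ (Ioi τ), 0 < slope G τ u :=
          h2.eventually (eventually_gt_nhds hDpos)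
        filter_upwards [h3, self_mem_nhdsWithin] with u hu hu'
        rw [slope_def_field] at hu
        have hden : (0:ℝ) < u - τ := sub_pos.mpr hu'
        have hnum : 0 < G u - G τ := by
          have h5 := mul_pos hu hden
          rwa [div_mul_cancel₀ _ hden.ne'] at h5
        linarith [hnum, hzero.le]
    obtain ⟨u', hu', hsub'⟩ := mem_nhdsGT_iff_exists_Ioc_subset.mp hev
    have hτy : τ < min u' T := lt_min hu' hltT
    have hyA : min u' T ∈ A := by
      refine ⟨⟨hτ₁.trans hτy.le, min_le_right _ _⟩, fun u hu => ?_⟩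
      rcases le_or_gt u τ with h | h
      · exact hτA.2 u ⟨hu.1, h⟩
      · exact hsub' ⟨h, hu.2.trans (min_le_left _ _)⟩
    exact absurd (le_csSup hAbdd hyA) (not_le.mpr hτy)
  intro t ht'
  exact hmono T (right_mem_Icc.mpr ht.le) (hτT ▸ hτA.2) t ht'
end

section
/- Let t₀ < T and I = [t₀, T]. Let N ≥ 1 be an integer, d₁, d₂ > 0, let k be a positive integer, let r : ℝ → ℝ be twice continuously differentiable with r(t) > 0 on I, and let J₁₁, J₁₂, J₂₁, J₂₂ : ℝ → ℝ be continuously differentiable on I with J₁₂(t) ≠ 0 on I. Write det J = J₁₁J₂₂ - J₁₂J₂₁, tr J = J₁₁ + J₂₂, ρ(t) = k(k+N-1)/r(t)², and μ(t) = r(t)^N. Suppose that for all t ∈ I: det J(t) - (d₂J₁₁(t) + d₁J₂₂(t))·k(k+N-1)/r(t)² + d₁d₂·k²(k+N-1)²/r(t)⁴ < -N·r''(t)/r(t) - N(N-1)·(r'(t)/r(t))² - N·(r'(t)/r(t))·[(d₁+d₂)·k(k+N-1)/r(t)² - tr J(t) - J₁₂'(t)/J₁₂(t)] - J₁₂(t)·(d/dt)((d₁k(k+N-1)/r(t)²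 - J₁₁(t))/J₁₂(t)). Then any differentiable pair V₁, V₂ : ℝ → ℝ satisfying V₁' = -d₁ρ(t)V₁ + J₁₁(t)V₁ + J₁₂(t)V₂ and V₂' = -d₂ρ(t)V₂ + J₂₁(t)V₁ + J₂₂(t)V₂ on I, with V₁(t₀) = μ(t₀) and -d₁ρ(t₀)μ(t₀) + J₁₁(t₀)μ(t₀) + J₁₂(t₀)V₂(t₀) = μ'(t₀), satisfies V₁(t) ≥ r(t)^N for all t ∈ I. -/
open Set Real

lemma aux_pow1 (N : ℕ) (hN : 1 ≤ N) (x : ℝ) (hx : x ≠ 0) : x ^ (N - 1) = x ^ N / x := by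
  obtain ⟨m, rfl⟩ : ∃ m, N = m + 1 := ⟨N - 1, (Nat.succ_pred_eq_of_pos hN).symm⟩
  rw [Nat.add_sub_cancel, pow_succ, mul_div_assoc, div_self hx, mul_one]

lemma aux_pow2 (N : ℕ) (hN : 1 ≤ N) (x : ℝ) (hx : x ≠ 0) :
    ((N : ℝ) - 1) * x ^ (N - 1 - 1) = ((N : ℝ) - 1) * (x ^ N / x ^ 2) := by
  obtain ⟨m, rfl⟩ : ∃ m, N = m + 1 := ⟨N - 1, (Nat.succ_pred_eq_of_pos hN).symm⟩
  rcases m with _ | p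
  · norm_num
  · have : ((p + 1 + 1 : ℕ) : ℝ) - 1 = (p : ℝ) + 1 := by push_cast; ring
    rw [this]
    have h2 : (p + 1 + 1) - 1 - 1 = p := by omega
    rw [h2]
    have h3 : x ^ (p + 1 + 1) = x ^ p * x ^ 2 := by ring
    rw [h3, mul_div_assoc, div_self (pow_ne_zero 2 hx), mul_one]

/-- If `f` is continuous, nonnegative at the left endpoint, and at every interior
point where `f < 0` it has a derivative `q ≥ P t * f t` with `P ≤ C`, then `f`
stays nonnegative. -/
lemma aux_barrier (a b C : ℝ) (f P : ℝ → ℝ)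
    (hfc : ContinuousOn f (Icc a b)) (hfa : 0 ≤ f a)
    (hP : ∀ t ∈ Icc a b, P t ≤ C)
    (hder : ∀ t ∈ Ioo a b, f t < 0 → ∃ q, HasDerivAt f q t ∧ P t * f t ≤ q) :
    ∀ t ∈ Icc a b, 0 ≤ f t := by
  by_contra hcon
  push_neg at hcon
  obtain ⟨t₂, ht₂, hft₂⟩ := hcon
  have hat₂ : a ≤ t₂ := ht₂.1
  have hat₂' : a < t₂ := lt_of_le_of_ne hat₂ (by rintro rfl; linarith)
  have hsub : Icc a t₂ ⊆ Icc a b := Icc_subset_Icc le_rfl ht₂.2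
  set K : Set ℝ := Icc a t₂ ∩ f ⁻¹' (Ici 0) with hK
  have hKne : K.Nonempty := ⟨a, left_mem_Icc.2 hat₂, hfa⟩
  have hKbdd : BddAbove K := ⟨t₂, fun x hx => hx.1.2⟩
  have hKclosed : IsClosed K :=
    (hfc.mono hsub).preimage_isClosed_of_isClosed isClosed_Icc isClosed_Ici
  set u := sSup K with hu
  have huK : u ∈ K := hKclosed.csSup_mem hKne hKbdd
  have hut₂ : u ≤ t₂ := huK.1.2
  have hau : a ≤ u := huK.1.1
  have hfu : (0:ℝ) ≤ f u := huK.2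
  have hult : u < t₂ := lt_of_le_of_ne hut₂ (by intro h; rw [h] at hfu; linarith)
  have hneg : ∀ s ∈ Ioc u t₂, f s < 0 := by
    intro s hs
    by_contra hfs
    push_neg at hfs
    have hsK : s ∈ K := ⟨⟨le_trans hau hs.1.le, hs.2⟩, hfs⟩
    exact absurd (le_csSup hKbdd hsK) (not_le.2 hs.1)
  set z : ℝ → ℝ := fun s => f s * Real.exp (-C * s) with hz
  have hsub2 : Icc u t₂ ⊆ Icc a b := Icc_subset_Icc hau ht₂.2
  have hzc : ContinuousOn z (Icc u t₂) :=
    (hfc.mono hsub2).mul ((Real.continuous_exp.comp (continuous_const.mul continuous_id)).continuousOn)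
  have hzderiv : ∀ x ∈ interior (Icc u t₂),
      DifferentiableAt ℝ z x ∧ 0 ≤ deriv z x := by
    intro x hx
    rw [interior_Icc] at hx
    have hxI : x ∈ Ioo a b := ⟨lt_of_le_of_lt hau hx.1, lt_of_lt_of_le hx.2 ht₂.2⟩
    have hfx : f x < 0 := hneg x ⟨hx.1, hx.2.le⟩
    obtain ⟨q, hq, hPq⟩ := hder x hxI hfx
    have hex : HasDerivAt (fun s => Real.exp (-C * s)) (Real.exp (-C * x) * (-C)) x := by
      simpa using ((hasDerivAt_id x).const_mul (-C)).exp
    have hzx : HasDerivAt z (q * Real.exp (-C * x) + f x * (Real.exp (-C * x) * (-C))) x :=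
      hq.mul hex
    refine ⟨hzx.differentiableAt, ?_⟩
    rw [hzx.deriv]
    have hPx : P x ≤ C := hP x (Ioo_subset_Icc_self hxI)
    have hexp : (0:ℝ) < Real.exp (-C * x) := Real.exp_pos _
    have h1 : P x * f x * Real.exp (-C * x) ≤ q * Real.exp (-C * x) :=
      mul_le_mul_of_nonneg_right hPq hexp.le
    have hfe : f x * Real.exp (-C * x) ≤ 0 :=
      mul_nonpos_iff.2 (Or.inr ⟨hfx.le, hexp.le⟩)
    have h2 : (C - P x) * (f x * Real.exp (-C * x)) ≤ 0 :=
      mul_nonpos_iff.2 (Or.inl ⟨sub_nonneg.2 hPx, hfe⟩)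
    nlinarith [h1, h2]
  have hmono : MonotoneOn z (Icc u t₂) :=
    monotoneOn_of_deriv_nonneg (convex_Icc u t₂) hzc
      (fun x hx => (hzderiv x hx).1.differentiableWithinAt)
      (fun x hx => (hzderiv x hx).2)
  have h1 : z u ≤ z t₂ := hmono (left_mem_Icc.2 hult.le) (right_mem_Icc.2 hult.le) hult.le
  have h2 : z t₂ < 0 := mul_neg_of_neg_of_pos hft₂ (Real.exp_pos _)
  have h3 : (0:ℝ) ≤ z u := mul_nonneg hfu (Real.exp_pos _).le
  linarith

/-- Core comparison argument: if `ω = V₁' μ - V₁ μ'` satisfies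
`ω' = P ω + V₁ γ` with `γ > 0`, starts at `0`, and `V₁` starts at `μ`, then
`V₁ ≥ μ` throughout. -/
lemma aux_core (t₀ T : ℝ) (ht : t₀ < T) (μ V₁ P γ : ℝ → ℝ)
    (hμpos : ∀ t ∈ Icc t₀ T, 0 < μ t)
    (hμd : Differentiable ℝ μ)
    (hV₁d : ∀ t ∈ Icc t₀ T, DifferentiableAt ℝ V₁ t)
    (hωc : ContinuousOn (fun s => deriv V₁ s * μ s - V₁ s * deriv μ s) (Icc t₀ T))
    (hPc : ContinuousOn P (Icc t₀ T))
    (hγpos : ∀ t ∈ Icc t₀ T, 0 < γ t)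
    (hω' : ∀ t ∈ Ioo t₀ T, HasDerivAt (fun s => deriv V₁ s * μ s - V₁ s * deriv μ s)
        (P t * (deriv V₁ t * μ t - V₁ t * deriv μ t) + V₁ t * γ t) t)
    (hic : V₁ t₀ = μ t₀) (hω0 : deriv V₁ t₀ = deriv μ t₀) :
    ∀ t ∈ Icc t₀ T, μ t ≤ V₁ t := by
  obtain ⟨C, hC⟩ := isCompact_Icc.exists_bound_of_continuousOn hPc
  have hPC : ∀ t ∈ Icc t₀ T, P t ≤ C := fun t ht' =>
    (le_abs_self _).trans (by simpa [Real.norm_eq_abs] using hC t ht')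
  have hV₁c : ContinuousOn V₁ (Icc t₀ T) := fun t ht' =>
    (hV₁d t ht').continuousAt.continuousWithinAt
  have hμc : ContinuousOn μ (Icc t₀ T) := hμd.continuous.continuousOn
  set S : Set ℝ := {t | t ∈ Icc t₀ T ∧ ∀ s ∈ Icc t₀ t, μ s ≤ V₁ s} with hS
  have ht₀S : t₀ ∈ S := by
    refine ⟨left_mem_Icc.2 ht.le, fun s hs => ?_⟩
    have : s = t₀ := le_antisymm hs.2 hs.1
    rw [this, hic]
  have hSne : S.Nonempty := ⟨t₀, ht₀S⟩
  have hSbdd : BddAbove S := ⟨T, fun x hx => hx.1.2⟩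
  set c : ℝ := sSup S with hc
  have hst : t₀ ≤ c := le_csSup hSbdd ht₀S
  have htT : c ≤ T := csSup_le hSne (fun x hx => hx.1.2)
  have hIco : ∀ s ∈ Ico t₀ c, μ s ≤ V₁ s := by
    intro s hs
    obtain ⟨x, hxS, hsx⟩ := exists_lt_of_lt_csSup hSne hs.2
    exact hxS.2 s ⟨hs.1, hsx.le⟩
  have hstar : ∀ s ∈ Icc t₀ c, μ s ≤ V₁ s := by
    intro s hs
    rcases eq_or_lt_of_le hs.2 with hsc | hsc
    · rcases eq_or_lt_of_le hst with h0 | h0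
      · have : s = t₀ := by rw [hsc, ← h0]
        rw [this, hic]
      · -- s = c, t₀ < c : closure argument
        set K : Set ℝ := Icc t₀ T ∩ (fun x => V₁ x - μ x) ⁻¹' Ici 0 with hK
        have hKclosed : IsClosed K :=
          (hV₁c.sub hμc).preimage_isClosed_of_isClosed isClosed_Icc isClosed_Ici
        have hIcoK : Ico t₀ c ⊆ K := by
          intro x hx
          exact ⟨⟨hx.1, (hx.2.le).trans htT⟩, sub_nonneg.2 (hIco x hx)⟩
        have hcK : c ∈ K := by
          have h1 : c ∈ closure (Ico t₀ c) := by
            rw [closure_Ico (ne_of_lt h0)]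
            exact right_mem_Icc.2 hst
          exact hKclosed.closure_subset_iff.2 hIcoK h1
        have := hcK.2
        rw [hsc]
        simpa [sub_nonneg] using this
    · exact hIco s ⟨hs.1, hsc⟩
  have hceq : c = T := by
    by_contra hne
    have hcT : c < T := lt_of_le_of_ne htT hne
    have hcI : c ∈ Icc t₀ T := ⟨hst, htT⟩
    have hV₁star : 0 < V₁ c := lt_of_lt_of_le (hμpos c hcI) (hstar c ⟨hst, le_rfl⟩)
    have hV₁ct : ContinuousAt V₁ c := (hV₁d c hcI).continuousAt
    have hnb : V₁ ⁻¹' (Ioi 0) ∈ nhds c := hV₁ct (Ioi_mem_nhds hV₁star)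
    rw [Metric.mem_nhds_iff] at hnb
    obtain ⟨ε, hε, hball⟩ := hnb
    set δ : ℝ := min (ε / 2) (T - c) with hδ
    have hδpos : 0 < δ := lt_min (half_pos hε) (sub_pos.2 hcT)
    set b : ℝ := c + δ with hb
    have hbT : b ≤ T := by
      have : δ ≤ T - c := min_le_right _ _
      simp [hb]; linarith
    have ht₀b : t₀ ≤ b := by have := hδpos; simp [hb]; linarith
    have hIccb : Icc t₀ b ⊆ Icc t₀ T := Icc_subset_Icc le_rfl hbT
    have hV₁pos : ∀ s ∈ Icc t₀ b, 0 < V₁ s := by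
      intro s hs
      by_cases hsc : s ≤ c
      · exact lt_of_lt_of_le (hμpos s ⟨hs.1, hsc.trans htT⟩) (hstar s ⟨hs.1, hsc⟩)
      · push_neg at hsc
        have : s ∈ Metric.ball c ε := by
          rw [Metric.mem_ball, Real.dist_eq, abs_of_pos (sub_pos.2 hsc)]
          have h1 : s ≤ c + δ := hs.2
          have h2 : δ ≤ ε / 2 := min_le_left _ _
          linarith
        exact hball this
    have hω0' : (fun s => deriv V₁ s * μ s - V₁ s * deriv μ s) t₀ = 0 := by
      simp only [hω0, hic]; ring
    have hωnn : ∀ t ∈ Icc t₀ b, 0 ≤ deriv V₁ t * μ t - V₁ t * deriv μ t := by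
      have := aux_barrier t₀ b C (fun s => deriv V₁ s * μ s - V₁ s * deriv μ s) P
        (hωc.mono hIccb) (le_of_eq hω0'.symm) (fun t ht' => hPC t (hIccb ht'))
        (fun t ht' _ => by
          refine ⟨_, hω' t ⟨ht'.1, lt_of_lt_of_le ht'.2 hbT⟩, ?_⟩
          have h1 : 0 < V₁ t := hV₁pos t (Ioo_subset_Icc_self ht')
          have h2 : 0 < γ t := hγpos t (hIccb (Ioo_subset_Icc_self ht'))
          show P t * (deriv V₁ t * μ t - V₁ t * deriv μ t)
            ≤ P t * (deriv V₁ t * μ t - V₁ t * deriv μ t) + V₁ t * γ t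
          nlinarith [mul_pos h1 h2])
      exact this
    set φ : ℝ → ℝ := fun s => V₁ s / μ s with hφ
    have hφc : ContinuousOn φ (Icc t₀ b) :=
      (hV₁c.mono hIccb).div (hμc.mono hIccb) (fun x hx => (hμpos x (hIccb hx)).ne')
    have hφd : ∀ x ∈ interior (Icc t₀ b),
        HasDerivAt φ ((deriv V₁ x * μ x - V₁ x * deriv μ x) / μ x ^ 2) x := by
      intro x hx
      rw [interior_Icc] at hx
      have hxI : x ∈ Icc t₀ T := hIccb (Ioo_subset_Icc_self hx)
      exact (hV₁d x hxI).hasDerivAt.div (hμd x).hasDerivAt (hμpos x hxI).ne'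
    have hφmono : MonotoneOn φ (Icc t₀ b) := by
      apply monotoneOn_of_deriv_nonneg (convex_Icc _ _) hφc
      · intro x hx
        exact (hφd x hx).differentiableAt.differentiableWithinAt
      · intro x hx
        rw [(hφd x hx).deriv]
        have hx' : x ∈ Icc t₀ b := by
          rw [interior_Icc] at hx; exact Ioo_subset_Icc_self hx
        exact div_nonneg (hωnn x hx') (sq_nonneg _)
    have hφ1 : φ t₀ = 1 := by
      simp only [hφ, hic]
      exact div_self (hμpos t₀ (left_mem_Icc.2 ht.le)).ne'
    have hbS : b ∈ S := by
      refine ⟨⟨ht₀b, hbT⟩, fun s hs => ?_⟩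
      have h1 : (1:ℝ) ≤ φ s := by
        rw [← hφ1]
        exact hφmono (left_mem_Icc.2 ht₀b) hs hs.1
      have h2 : 0 < μ s := hμpos s (hIccb hs)
      rwa [hφ, one_le_div h2] at h1
    have : b ≤ c := le_csSup hSbdd hbS
    simp [hb] at this
    linarith
  intro t ht'
  exact hstar t ⟨ht'.1, ht'.2.trans_eq hceq.symm⟩

/-- Instantiation of Theorem 3 (first branch) on an isotropically evolving
N-sphere of radius `r(t)`: with eigenvalues `ρ_k(t) = k(k+N-1)/r(t)²` and volume
factor `μ(t) = r(t)^N`, the differential inequality forces the component `V₁`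
of the linearized perturbation of the k-th mode to grow at least as fast as
`r(t)^N`. -/
theorem turing_instability_evolving_sphere
    (t₀ T : ℝ) (ht : t₀ < T)
    (N : ℕ) (hN : 1 ≤ N)
    (d₁ d₂ : ℝ) (hd₁ : 0 < d₁) (hd₂ : 0 < d₂)
    (k : ℕ) (hk : 1 ≤ k)
    (r J₁₁ J₁₂ J₂₁ J₂₂ V₁ V₂ : ℝ → ℝ)
    (hr : ContDiff ℝ 2 r)
    (hrpos : ∀ t ∈ Icc t₀ T, 0 < r t)
    (hJ₁₁d : ∀ t ∈ Icc t₀ T, DifferentiableAt ℝ J₁₁ t)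
    (hJ₁₁c : ContinuousOn (deriv J₁₁) (Icc t₀ T))
    (hJ₁₂d : ∀ t ∈ Icc t₀ T, DifferentiableAt ℝ J₁₂ t)
    (hJ₁₂c : ContinuousOn (deriv J₁₂) (Icc t₀ T))
    (hJ₂₁d : ∀ t ∈ Icc t₀ T, DifferentiableAt ℝ J₂₁ t)
    (hJ₂₁c : ContinuousOn (deriv J₂₁) (Icc t₀ T))
    (hJ₂₂d : ∀ t ∈ Icc t₀ T, DifferentiableAt ℝ J₂₂ t)
    (hJ₂₂c : ContinuousOn (deriv J₂₂) (Icc t₀ T))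
    (hJ₁₂ne : ∀ t ∈ Icc t₀ T, J₁₂ t ≠ 0)
    (hineq : ∀ t ∈ Icc t₀ T,
      J₁₁ t * J₂₂ t - J₁₂ t * J₂₁ t
          - (d₂ * J₁₁ t + d₁ * J₂₂ t)
            * ((k : ℝ) * ((k : ℝ) + (N : ℝ) - 1) / (r t) ^ 2)
          + d₁ * d₂ * ((k : ℝ) ^ 2 * ((k : ℝ) + (N : ℝ) - 1) ^ 2 / (r t) ^ 4)
        < -(N : ℝ) * (deriv (deriv r) t) / r t
          - (N : ℝ) * ((N : ℝ) - 1) * (deriv r t / r t) ^ 2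
          - (N : ℝ) * (deriv r t / r t)
            * ((d₁ + d₂) * ((k : ℝ) * ((k : ℝ) + (N : ℝ) - 1) / (r t) ^ 2)
                - (J₁₁ t + J₂₂ t) - deriv J₁₂ t / J₁₂ t)
          - J₁₂ t * deriv
              (fun s =>
                (d₁ * (k : ℝ) * ((k : ℝ) + (N : ℝ) - 1) / (r s) ^ 2 - J₁₁ s)
                  / J₁₂ s) t)
    (hV₁d : ∀ t ∈ Icc t₀ T, DifferentiableAt ℝ V₁ t)
    (hV₂d : ∀ t ∈ Icc t₀ T, DifferentiableAt ℝ V₂ t)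
    (hODE₁ : ∀ t ∈ Icc t₀ T,
      deriv V₁ t
        = -(d₁ * ((k : ℝ) * ((k : ℝ) + (N : ℝ) - 1) / (r t) ^ 2)) * V₁ t
          + J₁₁ t * V₁ t + J₁₂ t * V₂ t)
    (hODE₂ : ∀ t ∈ Icc t₀ T,
      deriv V₂ t
        = -(d₂ * ((k : ℝ) * ((k : ℝ) + (N : ℝ) - 1) / (r t) ^ 2)) * V₂ t
          + J₂₁ t * V₁ t + J₂₂ t * V₂ t)
    (hic : V₁ t₀ = (r t₀) ^ N)
    (hic' : -(d₁ * ((k : ℝ) * ((k : ℝ) + (N : ℝ) - 1) / (r t₀) ^ 2)) * (r t₀) ^ N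
        + J₁₁ t₀ * (r t₀) ^ N + J₁₂ t₀ * V₂ t₀
        = deriv (fun s => (r s) ^ N) t₀) :
    ∀ t ∈ Icc t₀ T, (r t) ^ N ≤ V₁ t := by
  -- abbreviations
  have hkN : (1:ℕ) ≤ N := hN
  -- regularity of r
  have hr2 : ContDiff ℝ (1 + 1 : WithTop ℕ∞) r := by
    have : (2 : WithTop ℕ∞) = 1 + 1 := by norm_num
    rwa [this] at hr
  have hrd : Differentiable ℝ r := hr.differentiable (by norm_num)
  have hr'd : Differentiable ℝ (deriv r) :=
    ((contDiff_succ_iff_deriv.mp hr2).2.2).differentiable one_ne_zero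
  -- derivatives of μ = r ^ N
  have hμ1 : ∀ t : ℝ, HasDerivAt (fun s => r s ^ N) ((N : ℝ) * r t ^ (N - 1) * deriv r t) t :=
    fun t => (hrd t).hasDerivAt.pow N
  have hμdiff : Differentiable ℝ (fun s => r s ^ N) := fun t => (hμ1 t).differentiableAt
  have hμderiv : ∀ t : ℝ, deriv (fun s => r s ^ N) t = (N : ℝ) * r t ^ (N - 1) * deriv r t :=
    fun t => (hμ1 t).deriv
  have hμ'eq : deriv (fun s => r s ^ N) = fun t => (N : ℝ) * r t ^ (N - 1) * deriv r t :=
    funext hμderiv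
  have hμ'd : ∀ t : ℝ, HasDerivAt (fun s => (N : ℝ) * r s ^ (N - 1) * deriv r s)
      ((N : ℝ) * (((N - 1 : ℕ) : ℝ) * r t ^ (N - 1 - 1) * deriv r t) * deriv r t
        + (N : ℝ) * r t ^ (N - 1) * deriv (deriv r) t) t :=
    fun t => (((hrd t).hasDerivAt.pow (N - 1)).const_mul (N : ℝ)).mul (hr'd t).hasDerivAt
  have hμ2 : ∀ t : ℝ, HasDerivAt (deriv (fun s => r s ^ N))
      ((N : ℝ) * (((N - 1 : ℕ) : ℝ) * r t ^ (N - 1 - 1) * deriv r t) * deriv r t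
        + (N : ℝ) * r t ^ (N - 1) * deriv (deriv r) t) t := by
    intro t; rw [hμ'eq]; exact hμ'd t
  have hμ'diff : Differentiable ℝ (deriv (fun s => r s ^ N)) :=
    fun t => (hμ2 t).differentiableAt
  have hμ2deriv : ∀ t : ℝ, deriv (deriv (fun s => r s ^ N)) t
      = (N : ℝ) * (((N - 1 : ℕ) : ℝ) * r t ^ (N - 1 - 1) * deriv r t) * deriv r t
        + (N : ℝ) * r t ^ (N - 1) * deriv (deriv r) t := fun t => (hμ2 t).deriv
  have hμ1val : ∀ t ∈ Icc t₀ T,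
      deriv (fun s => r s ^ N) t = (N : ℝ) * (deriv r t / r t) * r t ^ N := by
    intro t htI
    rw [hμderiv t, aux_pow1 N hN (r t) (hrpos t htI).ne']
    ring
  have hμ2val : ∀ t ∈ Icc t₀ T,
      deriv (deriv (fun s => r s ^ N)) t
        = ((N : ℝ) * deriv (deriv r) t / r t
            + (N : ℝ) * ((N : ℝ) - 1) * (deriv r t / r t) ^ 2) * r t ^ N := by
    intro t htI
    have hrne := (hrpos t htI).ne'
    rw [hμ2deriv t, Nat.cast_sub hN, Nat.cast_one, aux_pow2 N hN (r t) hrne,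
      aux_pow1 N hN (r t) hrne]
    ring
  -- the functions A and B
  set A : ℝ → ℝ := fun s => d₁ * (k : ℝ) * ((k : ℝ) + (N : ℝ) - 1) / r s ^ 2 - J₁₁ s with hAdef
  set B : ℝ → ℝ := fun s => d₂ * (k : ℝ) * ((k : ℝ) + (N : ℝ) - 1) / r s ^ 2 - J₂₂ s with hBdef
  have hAd : ∀ t ∈ Icc t₀ T, DifferentiableAt ℝ A t := by
    intro t htI
    rw [hAdef]
    exact ((differentiableAt_const _).div ((hrd t).pow 2)
      (pow_ne_zero 2 (hrpos t htI).ne')).sub (hJ₁₁d t htI)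
  have hBd : ∀ t ∈ Icc t₀ T, DifferentiableAt ℝ B t := by
    intro t htI
    rw [hBdef]
    exact ((differentiableAt_const _).div ((hrd t).pow 2)
      (pow_ne_zero 2 (hrpos t htI).ne')).sub (hJ₂₂d t htI)
  have hD : ∀ t ∈ Icc t₀ T,
      deriv (fun s => (d₁ * (k : ℝ) * ((k : ℝ) + (N : ℝ) - 1) / (r s) ^ 2 - J₁₁ s) / J₁₂ s) t
        = (deriv A t * J₁₂ t - A t * deriv J₁₂ t) / J₁₂ t ^ 2 := by
    intro t htI
    have h := ((hAd t htI).hasDerivAt.div (hJ₁₂d t htI).hasDerivAt (hJ₁₂ne t htI))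
    have h2 : (fun y => A y / J₁₂ y)
        = fun s => (d₁ * (k : ℝ) * ((k : ℝ) + (N : ℝ) - 1) / (r s) ^ 2 - J₁₁ s) / J₁₂ s := by
      funext y; rw [hAdef]
    rw [← h2]
    exact h.deriv
  -- P, R, γ
  set P : ℝ → ℝ := fun s => -A s - B s + deriv J₁₂ s / J₁₂ s with hPdef
  set R : ℝ → ℝ := fun s =>
    -(J₁₂ s * deriv
        (fun y => (d₁ * (k : ℝ) * ((k : ℝ) + (N : ℝ) - 1) / (r y) ^ 2 - J₁₁ y) / J₁₂ y) s)
      - A s * B s + J₁₂ s * J₂₁ s with hRdef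
  set γ : ℝ → ℝ := fun s =>
    P s * deriv (fun y => r y ^ N) s + R s * r s ^ N
      - deriv (deriv (fun y => r y ^ N)) s with hγdef
  have hγpos : ∀ t ∈ Icc t₀ T, 0 < γ t := by
    intro t htI
    have e := hineq t htI
    have hμpos : (0:ℝ) < r t ^ N := pow_pos (hrpos t htI) N
    have key : γ t = r t ^ N *
        ((-(N : ℝ) * (deriv (deriv r) t) / r t
            - (N : ℝ) * ((N : ℝ) - 1) * (deriv r t / r t) ^ 2
            - (N : ℝ) * (deriv r t / r t)
              * ((d₁ + d₂) * ((k : ℝ) * ((k : ℝ) + (N : ℝ) - 1) / (r t) ^ 2)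
                  - (J₁₁ t + J₂₂ t) - deriv J₁₂ t / J₁₂ t)
            - J₁₂ t * deriv
                (fun s =>
                  (d₁ * (k : ℝ) * ((k : ℝ) + (N : ℝ) - 1) / (r s) ^ 2 - J₁₁ s)
                    / J₁₂ s) t)
          - (J₁₁ t * J₂₂ t - J₁₂ t * J₂₁ t
            - (d₂ * J₁₁ t + d₁ * J₂₂ t)
              * ((k : ℝ) * ((k : ℝ) + (N : ℝ) - 1) / (r t) ^ 2)
            + d₁ * d₂ * ((k : ℝ) ^ 2 * ((k : ℝ) + (N : ℝ) - 1) ^ 2 / (r t) ^ 4))) := by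
      simp only [hγdef, hPdef, hRdef, hAdef, hBdef]
      rw [hμ1val t htI, hμ2val t htI]
      ring
    rw [key]
    exact mul_pos hμpos (sub_pos.2 e)
  -- rewrite the ODEs
  have hΦ : ∀ t ∈ Icc t₀ T, deriv V₁ t = -A t * V₁ t + J₁₂ t * V₂ t := by
    intro t htI
    rw [hODE₁ t htI, hAdef]
    ring
  have hΨ : ∀ t ∈ Icc t₀ T, deriv V₂ t = -B t * V₂ t + J₂₁ t * V₁ t := by
    intro t htI
    rw [hODE₂ t htI, hBdef]
    ring
  -- continuity
  have hV₁c : ContinuousOn V₁ (Icc t₀ T) := fun t htI =>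
    (hV₁d t htI).continuousAt.continuousWithinAt
  have hV₂c : ContinuousOn V₂ (Icc t₀ T) := fun t htI =>
    (hV₂d t htI).continuousAt.continuousWithinAt
  have hAc : ContinuousOn A (Icc t₀ T) := fun t htI =>
    (hAd t htI).continuousAt.continuousWithinAt
  have hBc : ContinuousOn B (Icc t₀ T) := fun t htI =>
    (hBd t htI).continuousAt.continuousWithinAt
  have hJc : ContinuousOn J₁₂ (Icc t₀ T) := fun t htI =>
    (hJ₁₂d t htI).continuousAt.continuousWithinAt
  have hPc : ContinuousOn P (Icc t₀ T) := by
    rw [hPdef]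
    exact (hAc.neg.sub hBc).add (hJ₁₂c.div hJc hJ₁₂ne)
  have hV₁'c : ContinuousOn (deriv V₁) (Icc t₀ T) := by
    apply ContinuousOn.congr ((hAc.neg.mul hV₁c).add (hJc.mul hV₂c))
    intro t htI
    exact hΦ t htI
  have hωc : ContinuousOn
      (fun s => deriv V₁ s * r s ^ N - V₁ s * deriv (fun y => r y ^ N) s) (Icc t₀ T) :=
    (hV₁'c.mul (hμdiff.continuous.continuousOn)).sub
      (hV₁c.mul (hμ'diff.continuous.continuousOn))
  -- the derivative of ω
  have hω' : ∀ t ∈ Ioo t₀ T,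
      HasDerivAt (fun s => deriv V₁ s * r s ^ N - V₁ s * deriv (fun y => r y ^ N) s)
        (P t * (deriv V₁ t * r t ^ N - V₁ t * deriv (fun y => r y ^ N) t) + V₁ t * γ t) t := by
    intro t htoo
    have htI : t ∈ Icc t₀ T := Ioo_subset_Icc_self htoo
    have hV₁t := (hV₁d t htI).hasDerivAt
    have hV₂t := (hV₂d t htI).hasDerivAt
    have hAt := (hAd t htI).hasDerivAt
    have hJt := (hJ₁₂d t htI).hasDerivAt
    have hΦhas : HasDerivAt (fun s => -A s * V₁ s + J₁₂ s * V₂ s)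
        (-(deriv A t) * V₁ t + -A t * deriv V₁ t
          + (deriv J₁₂ t * V₂ t + J₁₂ t * deriv V₂ t)) t :=
      (hAt.neg.mul hV₁t).add (hJt.mul hV₂t)
    have hEq : deriv V₁ =ᶠ[nhds t] fun s => -A s * V₁ s + J₁₂ s * V₂ s :=
      Filter.eventuallyEq_of_mem (Icc_mem_nhds htoo.1 htoo.2) (fun s hs => hΦ s hs)
    have hV₁'' : HasDerivAt (deriv V₁)
        (-(deriv A t) * V₁ t + -A t * deriv V₁ t
          + (deriv J₁₂ t * V₂ t + J₁₂ t * deriv V₂ t)) t :=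
      hΦhas.congr_of_eventuallyEq hEq
    have hμt : HasDerivAt (fun y => r y ^ N) (deriv (fun y => r y ^ N) t) t :=
      (hμdiff t).hasDerivAt
    have hμ't : HasDerivAt (deriv (fun y => r y ^ N))
        (deriv (deriv (fun y => r y ^ N)) t) t := (hμ'diff t).hasDerivAt
    have hcomb := (hV₁''.mul hμt).sub (hV₁t.mul hμ't)
    have hval : -(deriv A t) * V₁ t + -A t * deriv V₁ t
          + (deriv J₁₂ t * V₂ t + J₁₂ t * deriv V₂ t)
        = P t * deriv V₁ t + R t * V₁ t := by
      have hJne := hJ₁₂ne t htI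
      simp only [hPdef, hRdef]
      rw [hD t htI, hΦ t htI, hΨ t htI]
      field_simp
      ring
    rw [hval] at hcomb
    have hcomb' : HasDerivAt
        (fun s => deriv V₁ s * r s ^ N - V₁ s * deriv (fun y => r y ^ N) s) _ t := hcomb
    convert hcomb' using 1
    rw [hγdef]
    ring
  -- initial conditions
  have h0 : t₀ ∈ Icc t₀ T := left_mem_Icc.2 ht.le
  have hω0 : deriv V₁ t₀ = deriv (fun s => r s ^ N) t₀ := by
    rw [hΦ t₀ h0, hic, ← hic', hAdef]
    ring
  have hic2 : V₁ t₀ = (fun s => r s ^ N) t₀ := hic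
  have hμpos : ∀ t ∈ Icc t₀ T, 0 < (fun s => r s ^ N) t := fun t htI =>
    pow_pos (hrpos t htI) N
  have main := aux_core t₀ T ht (fun s => r s ^ N) V₁ P γ hμpos hμdiff hV₁d hωc hPc
    hγpos hω' hic2 hω0
  intro t htI
  exact main t htI
end
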